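/- arXiv:2302.02190 — 7 statements merged into one kernel-verified Lean document; each statement's English description precedes it below -/
import Mathlib

section
/- If f is a polynomial over a field F in variables x_1,...,x_n, with total degree equal to d_1+...+d_n for nonnegative integers d_i, and the coefficient of the monomial x_1^{d_1}···x_n^{d_n} in f is nonzero, then for any sets L_1,...,L_n ⊆ F with |L_i| = d_i + 1, there exists a point t ∈ L_1 × ... × L_n with f(t) ≠ 0. -/
open Finset MvPolynomial

/-- Out-degree of `v` in the digraph with arc set `S`. -/
def outDeg {α : Type*} [DecidableEq α] (S : Finset (α × α)) (v : α) : ℕ :=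
  (S.filter fun p => p.1 = v).card

/-- In-degree of `v` in the digraph with arc set `S`. -/
def inDeg {α : Type*} [DecidableEq α] (S : Finset (α × α)) (v : α) : ℕ :=
  (S.filter fun p => p.2 = v).card

/-- A digraph (arc set) is Eulerian if every vertex has equal in- and out-degree. -/
def IsEulerian {α : Type*} [DecidableEq α] (S : Finset (α × α)) : Prop :=
  ∀ v, outDeg S v = inDeg S v

instance {α : Type*} [DecidableEq α] [Fintype α] (S : Finset (α × α)) :
    Decidable (IsEulerian S) := by
  unfold IsEulerian; infer_instance

/-- Number of spanning Eulerian subdigraphs of `H` with an even number of edges. -/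
def EE {α : Type*} [DecidableEq α] [Fintype α] (H : Finset (α × α)) : ℕ :=
  (H.powerset.filter fun S => IsEulerian S ∧ Even S.card).card

/-- Number of spanning Eulerian subdigraphs of `H` with an odd number of edges. -/
def EO {α : Type*} [DecidableEq α] [Fintype α] (H : Finset (α × α)) : ℕ :=
  (H.powerset.filter fun S => IsEulerian S ∧ Odd S.card).card

/-- A digraph `H` contains a directed cycle of length `n`. -/
def HasDicycleLen {α : Type*} (H : Finset (α × α)) (n : ℕ) : Prop :=
  0 < n ∧ ∃ c : ZMod n → α, Function.Injective c ∧ ∀ i, (c i, c (i + 1)) ∈ H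

/-- `A` is an orientation of the simple graph `G`. -/
def IsOrientation {V : Type*} (G : SimpleGraph V) (A : Finset (V × V)) : Prop :=
  (∀ v w, G.Adj v w ↔ ((v, w) ∈ A ∨ (w, v) ∈ A)) ∧
  (∀ v w, (v, w) ∈ A → (w, v) ∉ A)

/-- Neighborhood `N_D(v)` in the digraph with arc set `A` (neighbors in either direction). -/
def nbr {V : Type*} [Fintype V] [DecidableEq V] (A : Finset (V × V)) (v : V) : Finset V :=
  Finset.univ.filter fun x => (v, x) ∈ A ∨ (x, v) ∈ A

/-- Closed neighborhood `N_D[v]`. -/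
def nbrC {V : Type*} [Fintype V] [DecidableEq V] (A : Finset (V × V)) (v : V) : Finset V :=
  insert v (nbr A v)

/-- Vertex type of `W(D)`: starred vertices `x*`, sector vertices `x^{vw}`,
and middle vertices `y^{vw}_x`. -/
abbrev WV (V : Type*) := V ⊕ ((V × V) × V) ⊕ ((V × V) × V)


instance {V : Type*} [DecidableEq V] : DecidableEq (WV V) :=
  inferInstanceAs (DecidableEq (V ⊕ ((V × V) × V) ⊕ ((V × V) × V)))

instance {V : Type*} [Fintype V] [DecidableEq V] : Fintype (WV V) :=
  inferInstanceAs (Fintype (V ⊕ ((V × V) × V) ⊕ ((V × V) × V)))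

/-- The starred vertex `x*`. -/
def vstar {V : Type*} (x : V) : WV V := Sum.inl x

/-- The sector vertex `x^{vw}` (for `e = (v,w)`). -/
def vsec {V : Type*} (e : V × V) (x : V) : WV V := Sum.inr (Sum.inl (e, x))

/-- The middle vertex `y^{vw}_x` (for `e = (v,w)`). -/
def vmid {V : Type*} (e : V × V) (x : V) : WV V := Sum.inr (Sum.inr (e, x))

/-- The set `N_D[v] △ N_D(w)` of possible endpoints of γ-paths through the `vw`-sector. -/
def gammaEnds {V : Type*} [Fintype V] [DecidableEq V] (A : Finset (V × V)) (e : V × V) :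
    Finset V :=
  (nbrC A e.1 ∪ nbr A e.2) \ (nbrC A e.1 ∩ nbr A e.2)

/-- The arc set of the digraph `W(D)` built from the digraph with arc set `A`. -/
def WArcSet {V : Type*} [Fintype V] [DecidableEq V] (A : Finset (V × V)) :
    Finset (WV V × WV V) :=
  (A.image fun e => (vstar e.1, vsec e e.1)) ∪
  (A.biUnion fun e => (nbr A e.1 \ nbr A e.2).image fun x => (vsec e e.1, vsec e x)) ∪
  (A.biUnion fun e => (nbr A e.2 \ nbrC A e.1).image fun x => (vsec e e.1, vmid e x)) ∪
  (A.biUnion fun e => (nbr A e.2 \ nbrC A e.1).image fun x => (vmid e x, vsec e x)) ∪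
  (A.biUnion fun e => (gammaEnds A e).image fun x => (vsec e x, vstar x))

/-- The γ-path `P(v,w;x)` from `v*` through the `vw`-sector to `x*`, as a set of arcs. -/
def gammaPath {V : Type*} [Fintype V] [DecidableEq V] (A : Finset (V × V)) (e : V × V)
    (x : V) : Finset (WV V × WV V) :=
  if x ∈ nbr A e.2 \ nbrC A e.1 then
    {(vstar e.1, vsec e e.1), (vsec e e.1, vmid e x), (vmid e x, vsec e x), (vsec e x, vstar x)}
  else
    {(vstar e.1, vsec e e.1), (vsec e e.1, vsec e x), (vsec e x, vstar x)}

/-- `ℓ` is an additive coloring of `G`. -/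
def IsAdditiveColoring {V : Type*} [Fintype V] [DecidableEq V] (G : SimpleGraph V)
    [DecidableRel G.Adj] (ℓ : V → ℕ) : Prop :=
  ∀ v w, G.Adj v w →
    ∑ u ∈ G.neighborFinset v, ℓ u ≠ ∑ u ∈ G.neighborFinset w, ℓ u
private lemma cn_key1 {F : Type*} [Field F] [DecidableEq F] (L : Finset F) {m k : ℕ} (hL : L.card = m + 1)
    (hk : k ≤ m) :
    ∑ t ∈ L, t ^ k * ∏ s ∈ L.erase t, (t - s)⁻¹ = if k = m then 1 else 0 := by
  classical
  have hinj : Set.InjOn (id : F → F) (L : Set F) := fun a _ b _ h => h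
  have hXk : (Polynomial.X ^ k : Polynomial F) = Lagrange.interpolate L id (fun x => x ^ k) := by
    refine Lagrange.eq_interpolate_of_eval_eq _ hinj ?_ (fun i hi => by simp)
    rw [Polynomial.degree_X_pow, hL]
    exact_mod_cast Nat.lt_succ_of_le hk
  have hbasis : ∀ t ∈ L, (Lagrange.basis L id t).coeff m = ∏ s ∈ L.erase t, (t - s)⁻¹ := by
    intro t ht
    have h1 : Lagrange.basis L id t
        = Polynomial.C (Lagrange.nodalWeight L id t) * Lagrange.nodal (L.erase t) id := by
      rw [Lagrange.basis_eq_prod_sub_inv_mul_nodal_div ht,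
        ← Lagrange.nodal_erase_eq_nodal_div ht]
    have hmonic : (Lagrange.nodal (L.erase t) id).Monic := Lagrange.nodal_monic
    have hdeg : (Lagrange.nodal (L.erase t) id).natDegree = m := by
      rw [Lagrange.natDegree_nodal, card_erase_of_mem ht, hL]
      omega
    rw [h1, Polynomial.coeff_C_mul, ← hdeg, hmonic.coeff_natDegree, mul_one]
    simp [Lagrange.nodalWeight]
  have := congrArg (fun p : Polynomial F => p.coeff m) hXk
  simp only [Polynomial.coeff_X_pow, Lagrange.interpolate_apply, Polynomial.finset_sum_coeff, Polynomial.coeff_C_mul] at this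
  calc ∑ t ∈ L, t ^ k * ∏ s ∈ L.erase t, (t - s)⁻¹
      = ∑ x ∈ L, x ^ k * (Lagrange.basis L id x).coeff m :=
        Finset.sum_congr rfl (fun t ht => by rw [hbasis t ht])
    _ = if m = k then 1 else 0 := this.symm
    _ = if k = m then 1 else 0 := by simp [eq_comm]

private lemma cn_key2 {F : Type*} [Field F] [DecidableEq F] {n : ℕ} (f : MvPolynomial (Fin n) F)
    (d : Fin n →₀ ℕ) (hdeg : f.totalDegree ≤ ∑ i, d i)
    (L : Fin n → Finset F) (hL : ∀ i, (L i).card = d i + 1) :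
    ∑ t ∈ Fintype.piFinset L,
      (MvPolynomial.eval t f) * ∏ i, ∏ s ∈ (L i).erase (t i), (t i - s)⁻¹ = f.coeff d := by
  classical
  have step1 : ∀ t : Fin n → F,
      (MvPolynomial.eval t f) * ∏ i, ∏ s ∈ (L i).erase (t i), (t i - s)⁻¹
      = ∑ α ∈ f.support, f.coeff α *
          ∏ i, (t i ^ α i * ∏ s ∈ (L i).erase (t i), (t i - s)⁻¹) := by
    intro t
    rw [eval_eq', Finset.sum_mul]
    refine Finset.sum_congr rfl fun α _ => ?_
    rw [mul_assoc, ← Finset.prod_mul_distrib]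
  calc ∑ t ∈ Fintype.piFinset L,
        (MvPolynomial.eval t f) * ∏ i, ∏ s ∈ (L i).erase (t i), (t i - s)⁻¹
      = ∑ α ∈ f.support, f.coeff α * ∑ t ∈ Fintype.piFinset L,
          ∏ i, (t i ^ α i * ∏ s ∈ (L i).erase (t i), (t i - s)⁻¹) := by
        rw [Finset.sum_congr rfl fun t _ => step1 t, Finset.sum_comm]
        exact Finset.sum_congr rfl fun α _ => by rw [Finset.mul_sum]
    _ = ∑ α ∈ f.support, f.coeff α *
          ∏ i, ∑ x ∈ L i, x ^ α i * ∏ s ∈ (L i).erase x, (x - s)⁻¹ := by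
        refine Finset.sum_congr rfl fun α _ => ?_
        rw [Finset.prod_univ_sum]
    _ = ∑ α ∈ f.support, f.coeff α * (if α = d then 1 else 0) := by
        refine Finset.sum_congr rfl fun α hα => ?_
        congr 1
        have hsum : ∑ i, α i ≤ ∑ i, d i := by
          refine le_trans ?_ hdeg
          have := MvPolynomial.le_totalDegree hα
          rwa [Finsupp.sum_fintype _ _ (fun _ => rfl)] at this
        by_cases hαd : α = d
        · subst hαd
          simp only [if_pos rfl]
          refine Finset.prod_eq_one fun i _ => ?_
          rw [cn_key1 (L i) (hL i) le_rfl, if_pos rfl]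
        · rw [if_neg hαd]
          have hj : ∃ j, α j < d j := by
            by_contra hco
            push_neg at hco
            have hle : ∀ i ∈ Finset.univ, d i ≤ α i := fun i _ => hco i
            have heq : ∑ i, d i = ∑ i, α i :=
              le_antisymm (Finset.sum_le_sum hle) hsum
            have h2 := (Finset.sum_eq_sum_iff_of_le hle).mp heq
            exact hαd (Finsupp.ext fun i => by
              have := h2 i (Finset.mem_univ i); omega)
          obtain ⟨j, hj⟩ := hj
          refine Finset.prod_eq_zero (Finset.mem_univ j) ?_
          rw [cn_key1 (L j) (hL j) hj.le, if_neg hj.ne]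
    _ = f.coeff d := by
        simp only [mul_ite, mul_one, mul_zero]
        rw [Finset.sum_ite_eq' f.support d (fun α => f.coeff α)]
        by_cases hd : d ∈ f.support
        · rw [if_pos hd]
        · rw [if_neg hd]
          exact (MvPolynomial.notMem_support_iff.mp hd).symm


/-- Combinatorial Nullstellensatz (Alon). -/
theorem combinatorial_nullstellensatz {F : Type*} [Field F] {n : ℕ}
    (f : MvPolynomial (Fin n) F) (d : Fin n →₀ ℕ)
    (hdeg : f.totalDegree = ∑ i, d i)
    (hcoeff : f.coeff d ≠ 0)
    (L : Fin n → Finset F) (hL : ∀ i, (L i).card = d i + 1) :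
    ∃ t : Fin n → F, (∀ i, t i ∈ L i) ∧ MvPolynomial.eval t f ≠ 0 := by
  classical
  have h := cn_key2 f d hdeg.le L hL
  have hne : ∑ t ∈ Fintype.piFinset L,
      (MvPolynomial.eval t f) * ∏ i, ∏ s ∈ (L i).erase (t i), (t i - s)⁻¹ ≠ 0 :=
    h ▸ hcoeff
  obtain ⟨t, ht, hne⟩ := Finset.exists_ne_zero_of_sum_ne_zero hne
  exact ⟨t, fun i => (Fintype.mem_piFinset.mp ht) i, left_ne_zero_of_mul hne⟩
end

section
/- Let D be an orientation of a finite simple graph G, and define the polynomial f = ∏_{(v,w) ∈ E(D)} (x_v − x_w) over the reals. Then the coefficient of ∏_{v ∈ V(D)} x_v^{d⁺_D(v)} in f equals EE(D) − EO(D), where EE(D) (resp. EO(D)) is the number of spanning Eulerian subdigraphs of D with an even (resp. odd) number of edges. -/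
open Finset MvPolynomial

lemma prodX {V ι : Type*} [DecidableEq V] (s : Finset ι) (f : ι → V) :
    (∏ e ∈ s, (X (f e) : MvPolynomial V ℝ)) =
      monomial (∑ e ∈ s, Finsupp.single (f e) 1) 1 := by
  induction s using Finset.cons_induction with
  | empty => simp
  | cons a s ha ih =>
      rw [Finset.prod_cons, ih, Finset.sum_cons, X, monomial_mul, one_mul]

lemma sum_single_apply {V ι : Type*} [DecidableEq V] (s : Finset ι) (f : ι → V) (v : V) :
    (∑ e ∈ s, Finsupp.single (f e) (1:ℕ)) v = (s.filter fun e => f e = v).card := by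
  rw [Finsupp.finset_sum_apply, Finset.card_filter]
  exact Finset.sum_congr rfl fun e _ => Finsupp.single_apply


/-- The coefficient of `∏ x_v^{d⁺(v)}` in `∏_{(v,w)∈E(D)} (x_v - x_w)` equals `EE(D) - EO(D)`. -/
theorem coeff_graphPoly_eq_EE_sub_EO {V : Type*} [Fintype V] [DecidableEq V]
    (G : SimpleGraph V) (A : Finset (V × V)) (hA : IsOrientation G A) :
    (∏ e ∈ A, (MvPolynomial.X e.1 - MvPolynomial.X e.2 : MvPolynomial V ℝ)).coeff
        (Finsupp.equivFunOnFinite.symm fun v => outDeg A v)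
      = (EE A : ℝ) - (EO A : ℝ) := by
  classical
  set target : V →₀ ℕ := Finsupp.equivFunOnFinite.symm fun v => outDeg A v with htarget
  have expand : (∏ e ∈ A, (MvPolynomial.X e.1 - MvPolynomial.X e.2 : MvPolynomial V ℝ))
      = ∑ S ∈ A.powerset,
          monomial ((∑ e ∈ S, Finsupp.single e.2 1) + ∑ e ∈ A \ S, Finsupp.single e.1 1)
            ((-1:ℝ)^S.card) := by
    have : ∀ e : V × V, (X e.1 - X e.2 : MvPolynomial V ℝ) = (- X e.2) + X e.1 := by
      intro e; ring
    rw [Finset.prod_congr rfl fun e _ => this e, Finset.prod_add]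
    refine Finset.sum_congr rfl fun S hS => ?_
    have h1 : (∏ e ∈ S, (- X e.2 : MvPolynomial V ℝ)) =
        (-1:MvPolynomial V ℝ)^S.card * ∏ e ∈ S, X e.2 := by
      rw [← Finset.prod_const, ← Finset.prod_mul_distrib]
      simp [neg_mul]
    rw [h1, prodX S (fun e => e.2), prodX (A \ S) (fun e => e.1), mul_assoc,
      monomial_mul, one_mul]
    have : ((-1:MvPolynomial V ℝ))^S.card = C ((-1:ℝ)^S.card) := by
      simp
    rw [this, C_mul_monomial, mul_one]
  rw [expand, MvPolynomial.coeff_sum]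
  have hterm : ∀ S ∈ A.powerset,
      (coeff target (monomial ((∑ e ∈ S, Finsupp.single e.2 1) +
          ∑ e ∈ A \ S, Finsupp.single e.1 1) ((-1:ℝ)^S.card)))
        = if IsEulerian S then (-1:ℝ)^S.card else 0 := by
    intro S hS
    rw [Finset.mem_powerset] at hS
    rw [coeff_monomial]
    have key : ((∑ e ∈ S, Finsupp.single e.2 1) +
        ∑ e ∈ A \ S, Finsupp.single e.1 1) = target ↔ IsEulerian S := by
      rw [Finsupp.ext_iff]
      have htv : ∀ v, target v = outDeg A v := by
        intro v; simp [htarget]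
      constructor
      · intro h v
        have := h v
        rw [Finsupp.add_apply, sum_single_apply, sum_single_apply, htv v] at this
        have hsub : ((A \ S).filter fun e => e.1 = v) =
            (A.filter fun e => e.1 = v) \ (S.filter fun e => e.1 = v) := by
          ext p; simp only [Finset.mem_filter, Finset.mem_sdiff]; tauto
        have hle : (S.filter fun e => e.1 = v) ⊆ (A.filter fun e => e.1 = v) :=
          Finset.filter_subset_filter _ hS
        rw [hsub, Finset.card_sdiff_of_subset hle] at this
        have hle' := Finset.card_le_card hle
        simp only [outDeg, inDeg] at this ⊢
        omega
      · intro h v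
        have hv := h v
        unfold IsEulerian outDeg inDeg at hv
        rw [Finsupp.add_apply, sum_single_apply, sum_single_apply, htv v]
        have hsub : ((A \ S).filter fun e => e.1 = v) =
            (A.filter fun e => e.1 = v) \ (S.filter fun e => e.1 = v) := by
          ext p; simp only [Finset.mem_filter, Finset.mem_sdiff]; tauto
        have hle : (S.filter fun e => e.1 = v) ⊆ (A.filter fun e => e.1 = v) :=
          Finset.filter_subset_filter _ hS
        rw [hsub, Finset.card_sdiff_of_subset hle]
        have hle' := Finset.card_le_card hle
        unfold outDeg
        omega
    exact if_congr key rfl rfl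
  rw [Finset.sum_congr rfl hterm, ← Finset.sum_filter]
  have h1 : ∑ S ∈ (A.powerset.filter fun S => IsEulerian S).filter (fun S => Even S.card),
      ((-1:ℝ))^S.card = (EE A : ℝ) := by
    rw [Finset.sum_congr rfl (fun S hS => Even.neg_one_pow (Finset.mem_filter.1 hS).2),
      Finset.sum_const, nsmul_eq_mul, mul_one, EE, Finset.filter_filter]
  have h2 : ∑ S ∈ (A.powerset.filter fun S => IsEulerian S).filter (fun S => ¬ Even S.card),
      ((-1:ℝ))^S.card = -(EO A : ℝ) := by
    rw [Finset.sum_congr rfl (fun S hS =>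
        Odd.neg_one_pow (Nat.not_even_iff_odd.mp (Finset.mem_filter.1 hS).2)),
      Finset.sum_const, nsmul_eq_mul, mul_neg_one, EO, Finset.filter_filter]
    have hXY : (A.powerset.filter fun S => IsEulerian S ∧ ¬ Even S.card)
        = A.powerset.filter fun S => IsEulerian S ∧ Odd S.card :=
      Finset.filter_congr fun S _ => by rw [Nat.not_even_iff_odd]
    rw [hXY]
  rw [← Finset.sum_filter_add_sum_filter_not
      (A.powerset.filter fun S => IsEulerian S) (fun S => Even S.card), h1, h2]
  ring
end

section
/- Let G be a finite simple graph and D an orientation of G with EE(D) ≠ EO(D). For each vertex v let L(v) be a set of d⁺_D(v) + 1 distinct integers. Then there exists a proper vertex coloring c : V(G) → ℤ with c(v) ∈ L(v) for every v. -/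
open Finset MvPolynomial
open scoped Classical

lemma AT_basisDivisor_leadingCoeff {F : Type*} [Field F] (x y : F) :
    (Lagrange.basisDivisor x y).leadingCoeff = (x - y)⁻¹ := by
  rcases eq_or_ne x y with h | h
  · simp [h, Lagrange.basisDivisor_self]
  · unfold Lagrange.basisDivisor
    rw [Polynomial.leadingCoeff_mul, Polynomial.leadingCoeff_C, (Polynomial.monic_X_sub_C y).leadingCoeff, mul_one]

lemma AT_key1 (s : Finset ℚ) (d : ℕ) (hd : d < s.card) :
    ∑ a ∈ s, a ^ d * ∏ b ∈ s.erase a, (a - b)⁻¹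
      = if d = s.card - 1 then 1 else 0 := by
  have hinj : Set.InjOn (id : ℚ → ℚ) s := Function.injective_id.injOn
  have hdeg : (Polynomial.X ^ d : Polynomial ℚ).degree < s.card := by
    simpa [Polynomial.degree_X_pow] using (by exact_mod_cast hd : (d : WithBot ℕ) < s.card)
  have h := Lagrange.eq_interpolate (f := (Polynomial.X ^ d : Polynomial ℚ)) hinj hdeg
  have hcoeff := congrArg (fun p => p.coeff (s.card - 1)) h
  simp only [Lagrange.interpolate_apply] at hcoeff
  rw [Polynomial.coeff_X_pow, Polynomial.finset_sum_coeff] at hcoeff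
  have hb : ∀ a ∈ s, (Polynomial.C (Polynomial.eval (id a) (Polynomial.X^d : Polynomial ℚ)) * Lagrange.basis s id a).coeff (s.card - 1)
      = a ^ d * ∏ b ∈ s.erase a, (a - b)⁻¹ := by
    intro a ha
    rw [Polynomial.coeff_C_mul]
    congr 1
    · simp
    · have hnd := Lagrange.natDegree_basis hinj ha
      rw [← hnd, Polynomial.coeff_natDegree]
      unfold Lagrange.basis
      rw [Polynomial.leadingCoeff_prod]
      exact Finset.prod_congr rfl fun b hb => by
        rw [AT_basisDivisor_leadingCoeff]; rfl
  rw [Finset.sum_congr rfl hb] at hcoeff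
  rw [← hcoeff]
  by_cases h : d = s.card - 1 <;> simp [h, eq_comm]

lemma AT_AT_key2m {V : Type*} [Fintype V] [DecidableEq V] (L' : V → Finset ℚ)
    (hL : ∀ v, 0 < (L' v).card) (d : V →₀ ℕ) (a : ℚ)
    (hd : ∑ v, d v ≤ ∑ v, ((L' v).card - 1)) :
    ∑ c ∈ Fintype.piFinset L',
      (a * ∏ v, c v ^ d v) * ∏ v, ∏ b ∈ (L' v).erase (c v), (c v - b)⁻¹
    = if d = Finsupp.equivFunOnFinite.symm (fun v => (L' v).card - 1) then a else 0 := by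
  have lhs_eq : ∑ c ∈ Fintype.piFinset L',
      (a * ∏ v, c v ^ d v) * ∏ v, ∏ b ∈ (L' v).erase (c v), (c v - b)⁻¹
      = a * ∏ v, ∑ x ∈ L' v, x ^ d v * ∏ b ∈ (L' v).erase x, (x - b)⁻¹ := by
    rw [Finset.prod_univ_sum]
    rw [Finset.mul_sum]
    refine Finset.sum_congr rfl fun c _ => ?_
    rw [mul_assoc, ← Finset.prod_mul_distrib]
  rw [lhs_eq]
  have hiff : (d = Finsupp.equivFunOnFinite.symm (fun v => (L' v).card - 1))
      ↔ ∀ v, d v = (L' v).card - 1 := by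
    rw [DFunLike.ext_iff]; simp
  by_cases hall : ∀ v, d v = (L' v).card - 1
  · rw [if_pos (hiff.mpr hall)]
    have h1 : ∀ v ∈ univ, (∑ x ∈ L' v, x ^ d v * ∏ b ∈ (L' v).erase x, (x - b)⁻¹) = 1 := by
      intro v _
      rw [AT_key1 _ _ (by have := hL v; have := hall v; omega), if_pos (hall v)]
    rw [Finset.prod_congr rfl h1, Finset.prod_const_one, mul_one]
  · rw [if_neg (hiff.not.mpr hall)]
    push_neg at hall
    have hex : ∃ u, d u < (L' u).card - 1 := by
      by_contra hno
      push_neg at hno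
      obtain ⟨u, hu⟩ := hall
      have : ∑ v, ((L' v).card - 1) < ∑ v, d v :=
        Finset.sum_lt_sum (fun i _ => hno i)
          ⟨u, Finset.mem_univ u, lt_of_le_of_ne (hno u) (Ne.symm hu)⟩
      omega
    obtain ⟨u, hu⟩ := hex
    have hz : (∑ x ∈ L' u, x ^ d u * ∏ b ∈ (L' u).erase x, (x - b)⁻¹) = 0 := by
      rw [AT_key1 _ _ (by have := hL u; omega), if_neg (by omega)]
    rw [Finset.prod_eq_zero (Finset.mem_univ u) hz, mul_zero]

lemma AT_key2 {V : Type*} [Fintype V] [DecidableEq V] (L' : V → Finset ℚ)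
    (hL : ∀ v, 0 < (L' v).card) (f : MvPolynomial V ℚ)
    (htd : f.totalDegree ≤ ∑ v, ((L' v).card - 1)) :
    ∑ c ∈ Fintype.piFinset L',
      MvPolynomial.eval c f * ∏ v, ∏ b ∈ (L' v).erase (c v), (c v - b)⁻¹
    = f.coeff (Finsupp.equivFunOnFinite.symm (fun v => (L' v).card - 1)) := by
  conv_lhs => rw [f.as_sum]
  have : ∀ c ∈ Fintype.piFinset L',
      MvPolynomial.eval c (∑ d ∈ f.support, monomial d (f.coeff d))
        * ∏ v, ∏ b ∈ (L' v).erase (c v), (c v - b)⁻¹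
      = ∑ d ∈ f.support, (f.coeff d * ∏ v, c v ^ d v)
        * ∏ v, ∏ b ∈ (L' v).erase (c v), (c v - b)⁻¹ := by
    intro c _
    rw [map_sum, Finset.sum_mul]
    refine Finset.sum_congr rfl fun d _ => ?_
    congr 1
    rw [MvPolynomial.eval_monomial]
    congr 1
    rw [Finsupp.prod_fintype]
    intro v; exact pow_zero _
  rw [Finset.sum_congr rfl this, Finset.sum_comm]
  have hcoe : ∀ d ∈ f.support, (∑ c ∈ Fintype.piFinset L',
      (f.coeff d * ∏ v, c v ^ d v) * ∏ v, ∏ b ∈ (L' v).erase (c v), (c v - b)⁻¹)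
      = if d = Finsupp.equivFunOnFinite.symm (fun v => (L' v).card - 1) then f.coeff d else 0 := by
    intro d hd
    apply AT_AT_key2m L' hL
    have hle : ∑ v, d v ≤ f.totalDegree := by
      have := (Finsupp.sum_fintype d (fun _ e => e) (fun _ => rfl)).symm
      rw [this]
      exact MvPolynomial.le_totalDegree hd
    exact hle.trans htd
  rw [Finset.sum_congr rfl hcoe, Finset.sum_ite_eq' f.support _ (fun d => f.coeff d)]
  by_cases hmem : (Finsupp.equivFunOnFinite.symm (fun v => (L' v).card - 1)) ∈ f.support
  · rw [if_pos hmem]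
  · rw [if_neg hmem, eq_comm]
    exact MvPolynomial.notMem_support_iff.mp hmem

lemma AT_prodX {V : Type*} [DecidableEq V] (s : Finset (V × V)) (g : V × V → V) :
    ∏ e ∈ s, (X (g e) : MvPolynomial V ℚ)
      = monomial (∑ e ∈ s, Finsupp.single (g e) 1) 1 := by
  induction s using Finset.induction_on with
  | empty => simp [MvPolynomial.monomial_zero']
  | insert _ _ h ih =>
      rw [Finset.prod_insert h, Finset.sum_insert h, ih, MvPolynomial.X,
        MvPolynomial.monomial_mul, mul_one]

lemma AT_sumSingleApply {V : Type*} [DecidableEq V] (s : Finset (V × V)) (g : V × V → V)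
    (u : V) : (∑ e ∈ s, Finsupp.single (g e) 1) u = (s.filter fun e => g e = u).card := by
  rw [Finset.card_filter, Finsupp.finset_sum_apply]
  exact Finset.sum_congr rfl fun e _ => by rw [Finsupp.single_apply]

lemma AT_outDeg_split {V : Type*} [DecidableEq V] {A t : Finset (V × V)} (ht : t ⊆ A) (u : V) :
    outDeg A u = outDeg t u + outDeg (A \ t) u := by
  unfold outDeg
  rw [← Finset.card_union_of_disjoint, ← Finset.filter_union, Finset.union_sdiff_of_subset ht]
  exact Finset.disjoint_filter_filter (Finset.sdiff_disjoint.symm)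

lemma AT_key3 {V : Type*} [Fintype V] [DecidableEq V] (A : Finset (V × V)) :
    (∏ e ∈ A, (X e.1 - X e.2 : MvPolynomial V ℚ)).coeff
      (Finsupp.equivFunOnFinite.symm fun v => outDeg A v)
    = (EE A : ℚ) - (EO A : ℚ) := by
  set D : V →₀ ℕ := Finsupp.equivFunOnFinite.symm fun v => outDeg A v with hD
  have expand : ∏ e ∈ A, (X e.1 - X e.2 : MvPolynomial V ℚ)
      = ∑ t ∈ A.powerset, (-1 : ℚ) ^ (A \ t).card •
          monomial ((∑ e ∈ t, Finsupp.single e.1 1) + ∑ e ∈ A \ t, Finsupp.single e.2 1) 1 := by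
    have : ∀ e ∈ A, (X e.1 - X e.2 : MvPolynomial V ℚ) = X e.1 + (- X e.2) := fun _ _ => by ring
    rw [Finset.prod_congr rfl this, Finset.prod_add]
    refine Finset.sum_congr rfl fun t ht => ?_
    have hneg : ∏ e ∈ A \ t, (-X e.2 : MvPolynomial V ℚ)
        = (-1 : ℚ) ^ (A \ t).card • ∏ e ∈ A \ t, (X e.2 : MvPolynomial V ℚ) := by
      rw [smul_eq_C_mul, map_pow, ← Finset.prod_const, ← Finset.prod_mul_distrib]
      exact Finset.prod_congr rfl fun e _ => by rw [map_neg, map_one]; ring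
    rw [hneg, AT_prodX, AT_prodX, mul_smul_comm, MvPolynomial.monomial_mul, mul_one]
  rw [expand, MvPolynomial.coeff_sum]
  have hterm : ∀ t ∈ A.powerset,
      ((-1 : ℚ) ^ (A \ t).card •
        monomial ((∑ e ∈ t, Finsupp.single e.1 1) + ∑ e ∈ A \ t, Finsupp.single e.2 1) 1).coeff D
      = if IsEulerian (A \ t) then (-1 : ℚ) ^ (A \ t).card else 0 := by
    intro t ht
    rw [Finset.mem_powerset] at ht
    rw [MvPolynomial.coeff_smul, MvPolynomial.coeff_monomial]
    have hiff : ((∑ e ∈ t, Finsupp.single e.1 1) + ∑ e ∈ A \ t, Finsupp.single e.2 1) = D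
        ↔ IsEulerian (A \ t) := by
      rw [DFunLike.ext_iff]
      have hptwise : ∀ u, (((∑ e ∈ t, Finsupp.single e.1 1)
          + ∑ e ∈ A \ t, Finsupp.single e.2 1 : V →₀ ℕ)) u
          = outDeg t u + inDeg (A \ t) u := by
        intro u
        rw [Finsupp.add_apply, AT_sumSingleApply, AT_sumSingleApply]; rfl
      have hDu : ∀ u, D u = outDeg t u + outDeg (A \ t) u := by
        intro u
        have : D u = outDeg A u := by simp [hD]
        rw [this, AT_outDeg_split ht u]
      constructor
      · intro h u
        have := h u
        rw [hptwise u, hDu u] at this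
        omega
      · intro h u
        rw [hptwise u, hDu u, h u]
    by_cases h : IsEulerian (A \ t)
    · rw [if_pos (hiff.mpr h), if_pos h, smul_eq_mul, mul_one]
    · rw [if_neg (fun hc => h (hiff.mp hc)), if_neg h, smul_eq_mul, mul_zero]
  rw [Finset.sum_congr rfl hterm]
  have reindex : ∑ t ∈ A.powerset, (if IsEulerian (A \ t) then (-1:ℚ)^(A \ t).card else 0)
      = ∑ S ∈ A.powerset, (if IsEulerian S then (-1:ℚ)^S.card else 0) := by
    refine Finset.sum_nbij' (fun t => A \ t) (fun S => A \ S) ?_ ?_ ?_ ?_ ?_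
    · intro a ha; exact Finset.mem_powerset.mpr (Finset.sdiff_subset)
    · intro a ha; exact Finset.mem_powerset.mpr (Finset.sdiff_subset)
    · intro a ha; exact Finset.sdiff_sdiff_eq_self (Finset.mem_powerset.mp ha)
    · intro a ha; exact Finset.sdiff_sdiff_eq_self (Finset.mem_powerset.mp ha)
    · intro a ha; rfl
  rw [reindex, ← Finset.sum_filter]
  have hsplit : ∀ S ∈ A.powerset.filter (fun S => IsEulerian S),
      ((-1:ℚ)^S.card) = if Even S.card then (1:ℚ) else -1 := by
    intro S _
    by_cases h : Even S.card
    · rw [if_pos h, h.neg_one_pow]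
    · rw [if_neg h, (Nat.not_even_iff_odd.mp h).neg_one_pow]
  rw [Finset.sum_congr rfl hsplit, Finset.sum_ite, Finset.sum_const, Finset.sum_const,
    Finset.filter_filter, Finset.filter_filter]
  have h2 : A.powerset.filter (fun S => IsEulerian S ∧ ¬ Even S.card)
      = A.powerset.filter (fun S => IsEulerian S ∧ Odd S.card) := by
    apply Finset.filter_congr
    intro S _
    simp [Nat.not_even_iff_odd]
  rw [h2]
  unfold EE EO
  simp only [nsmul_eq_mul, smul_eq_mul, mul_one, mul_neg]
  push_cast
  ring

/-- The Alon–Tarsi theorem. -/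
theorem alon_tarsi {V : Type*} [Fintype V] [DecidableEq V]
    (G : SimpleGraph V) (A : Finset (V × V)) (hA : IsOrientation G A)
    (hAT : EE A ≠ EO A)
    (L : V → Finset ℤ) (hL : ∀ v, (L v).card = outDeg A v + 1) :
    ∃ c : V → ℤ, (∀ v, c v ∈ L v) ∧ ∀ v w, G.Adj v w → c v ≠ c w := by
  classical
  -- the list sets over ℚ
  set L' : V → Finset ℚ := fun v => (L v).image (fun z : ℤ => (z : ℚ)) with hL'def
  have hcard' : ∀ v, (L' v).card = outDeg A v + 1 := by
    intro v
    rw [hL'def]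
    simp only
    have hinj : Function.Injective (fun z : ℤ => (z : ℚ)) := fun a b h => by simpa using h
    rw [Finset.card_image_of_injective _ hinj, hL v]
  have hLpos : ∀ v, 0 < (L' v).card := fun v => by rw [hcard' v]; omega
  set f : MvPolynomial V ℚ := ∏ e ∈ A, (X e.1 - X e.2) with hfdef
  have hcardA : A.card = ∑ v, outDeg A v :=
    Finset.card_eq_sum_card_fiberwise (fun e _ => Finset.mem_univ e.1)
  have htd : f.totalDegree ≤ ∑ v, ((L' v).card - 1) := by
    have h1 : f.totalDegree ≤ ∑ e ∈ A, (1 : ℕ) := by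
      refine (MvPolynomial.totalDegree_finset_prod A _).trans ?_
      refine Finset.sum_le_sum fun e _ => ?_
      refine (MvPolynomial.totalDegree_sub _ _).trans ?_
      simp [MvPolynomial.totalDegree_X]
    have h2 : ∑ v, ((L' v).card - 1) = ∑ v, outDeg A v :=
      Finset.sum_congr rfl fun v _ => by rw [hcard' v]; omega
    rw [h2]
    simpa [hcardA] using h1
  have htarget : (Finsupp.equivFunOnFinite.symm fun v => (L' v).card - 1)
      = (Finsupp.equivFunOnFinite.symm fun v => outDeg A v) := by
    congr 1
    funext v
    rw [hcard' v]
    omega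
  have hsum := AT_key2 L' hLpos f htd
  rw [htarget, hfdef, AT_key3 A] at hsum
  have hne : (EE A : ℚ) - (EO A : ℚ) ≠ 0 := by
    intro h
    exact hAT (Nat.cast_injective (by linarith : (EE A : ℚ) = EO A))
  rw [← hsum] at hne
  obtain ⟨c, hcmem, hcne⟩ := Finset.exists_ne_zero_of_sum_ne_zero hne
  have hevalne : MvPolynomial.eval c f ≠ 0 := fun h => hcne (by rw [h, zero_mul])
  have heval : MvPolynomial.eval c f = ∏ e ∈ A, (c e.1 - c e.2) := by
    rw [hfdef, map_prod]
    exact Finset.prod_congr rfl fun e _ => by simp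
  have hfac : ∀ e ∈ A, c e.1 - c e.2 ≠ 0 := by
    rw [heval] at hevalne
    exact fun e he => Finset.prod_ne_zero_iff.mp hevalne e he
  have hmem : ∀ v, ∃ z ∈ L v, (z : ℚ) = c v := by
    intro v
    have := Fintype.mem_piFinset.mp hcmem v
    rw [hL'def] at this
    simpa using Finset.mem_image.mp this
  choose g hg1 hg2 using hmem
  refine ⟨g, hg1, fun v w hadj hgeq => ?_⟩
  have hcvw : c v ≠ c w := by
    rcases (hA.1 v w).mp hadj with h | h
    · exact sub_ne_zero.mp (hfac _ h)
    · exact fun hc => sub_ne_zero.mp (hfac _ h) hc.symm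
  exact hcvw (by rw [← hg2 v, ← hg2 w, hgeq])
end

section
/- Let D be a digraph, and let M be a monomial in the expansion of ∏_{(v,w) ∈ E(D)} (y_v − x_w) obtained by choosing one signed variable per factor, with S_M the associated spanning subdigraph of D (arcs where −x_w was chosen). Then S_M is Eulerian if and only if deg_M(x_v) + deg_M(y_v) = d⁺_D(v) for every vertex v. -/
open Finset MvPolynomial

/-- `S_M` is Eulerian iff `deg_M(x_v) + deg_M(y_v) = d⁺_D(v)` for every vertex `v`.
Here the monomial `M` is encoded by the choice function `c` (with `c e = true` meaning `-x_{e.2}`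
was chosen from the factor of arc `e`, and `c e = false` meaning `y_{e.1}` was chosen), so that
`deg_M(x_v)` is the number of arcs `e` with `c e = true` and `e.2 = v`, and `deg_M(y_v)` is the
number of arcs `e` with `c e = false` and `e.1 = v`. -/
theorem eulerian_iff_degree_condition {V : Type*} [Fintype V] [DecidableEq V]
    (A : Finset (V × V)) (c : {e // e ∈ A} → Bool) :
    IsEulerian ((A.attach.filter fun e => c e = true).image Subtype.val : Finset (V × V)) ↔
      ∀ v : V,
        (A.attach.filter fun e => c e = true ∧ (e : V × V).2 = v).card
          + (A.attach.filter fun e => c e = false ∧ (e : V × V).1 = v).card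
          = outDeg A v := by
  have hcard : ∀ (p : V × V → Prop) [DecidablePred p],
      (((A.attach.filter fun e => c e = true).image Subtype.val).filter p).card
        = (A.attach.filter fun e => c e = true ∧ p e.1).card := by
    intro p _
    rw [Finset.filter_image, Finset.card_image_of_injective _ Subtype.val_injective,
      Finset.filter_filter]
  have hsplit : ∀ v : V, outDeg A v
      = (A.attach.filter fun e => c e = true ∧ (e : V × V).1 = v).card
        + (A.attach.filter fun e => c e = false ∧ (e : V × V).1 = v).card := by
    intro v
    have key : (A.filter fun p => p.1 = v).card
        = (A.attach.filter fun e : {e // e ∈ A} => (e : V × V).1 = v).card := by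
      rw [Finset.filter_attach (fun p : V × V => p.1 = v) A, Finset.card_map, Finset.card_attach]
    rw [outDeg, key, ← Finset.card_union_of_disjoint]
    · congr 1
      ext e
      simp only [Finset.mem_union, Finset.mem_filter, Finset.mem_attach, true_and]
      rcases h : c e with _ | _ <;> simp
    · rw [Finset.disjoint_filter]
      rintro e _ ⟨h1, _⟩ ⟨h2, _⟩
      simp [h1] at h2
  constructor
  · intro hE v
    have h1 := hcard (fun p => p.1 = v)
    have h2 := hcard (fun p => p.2 = v)
    have := hE v
    rw [outDeg, inDeg, h1, h2] at this
    rw [hsplit v]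
    omega
  · intro h v
    have h1 := hcard (fun p => p.1 = v)
    have h2 := hcard (fun p => p.2 = v)
    rw [outDeg, inDeg, h1, h2]
    have hv := h v
    rw [hsplit v] at hv
    omega
end

section
/- In the digraph W(D) constructed from a digraph D, two γ-paths P(u,v;w) and P(x,y;z) are edge disjoint if and only if (u,v) ≠ (x,y) as arcs of D. -/
open Finset MvPolynomial

/-- Two γ-paths are edge disjoint iff they pass through distinct sectors. -/
theorem gammaPath_disjoint_iff {V : Type*} [Fintype V] [DecidableEq V]
    (A : Finset (V × V)) (hsimple : ∀ v, (v, v) ∉ A)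
    (e e' : V × V) (he : e ∈ A) (he' : e' ∈ A)
    (x z : V) (hx : x ∈ gammaEnds A e) (hz : z ∈ gammaEnds A e') :
    Disjoint (gammaPath A e x) (gammaPath A e' z) ↔ e ≠ e' := by
  constructor
  · intro hd hee
    subst hee
    have h1 : (vstar e.1, vsec e e.1) ∈ gammaPath A e x := by
      unfold gammaPath; split <;> simp
    have h2 : (vstar e.1, vsec e e.1) ∈ gammaPath A e z := by
      unfold gammaPath; split <;> simp
    exact (Finset.disjoint_left.mp hd h1) h2
  · intro hne
    rw [Finset.disjoint_left]
    intro a ha ha'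
    apply hne
    unfold gammaPath at ha ha'
    split at ha <;> split at ha' <;>
      simp only [Finset.mem_insert, Finset.mem_singleton] at ha ha' <;>
      rcases ha with rfl|rfl|rfl|rfl <;>
      simp_all [vstar, vsec, vmid, Prod.ext_iff]
end

section
/- Let S be a spanning subdigraph of W(D). Then S is Eulerian if and only if (1) the edge set of S is a (possibly empty) union of pairwise edge-disjoint γ-paths, and (2) for each vertex v* corresponding to v ∈ V(D), the in-degree and out-degree of v* in S are equal. -/
open Finset MvPolynomial

section
variable {V : Type*} [Fintype V] [DecidableEq V] {A : Finset (V × V)}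

lemma mem_nbr {v x : V} : x ∈ nbr A v ↔ (v, x) ∈ A ∨ (x, v) ∈ A := by simp [nbr]

lemma mem_W_iff {a : WV V × WV V} : a ∈ WArcSet A ↔
    (∃ e ∈ A, a = (vstar e.1, vsec e e.1)) ∨
    (∃ e ∈ A, ∃ x ∈ nbr A e.1 \ nbr A e.2, a = (vsec e e.1, vsec e x)) ∨
    (∃ e ∈ A, ∃ x ∈ nbr A e.2 \ nbrC A e.1, a = (vsec e e.1, vmid e x)) ∨
    (∃ e ∈ A, ∃ x ∈ nbr A e.2 \ nbrC A e.1, a = (vmid e x, vsec e x)) ∨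
    (∃ e ∈ A, ∃ x ∈ gammaEnds A e, a = (vsec e x, vstar x)) := by
  simp [WArcSet, Finset.mem_union, Finset.mem_image, Finset.mem_biUnion, eq_comm]

end
section
variable {α : Type*} [DecidableEq α]

lemma outDeg_pos_of_mem {S : Finset (α × α)} {u w : α} (h : (u, w) ∈ S) : 0 < outDeg S u :=
  Finset.card_pos.2 ⟨(u, w), Finset.mem_filter.2 ⟨h, rfl⟩⟩

lemma inDeg_pos_of_mem {S : Finset (α × α)} {u w : α} (h : (u, w) ∈ S) : 0 < inDeg S w :=
  Finset.card_pos.2 ⟨(u, w), Finset.mem_filter.2 ⟨h, rfl⟩⟩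

lemma exists_out_of_pos {S : Finset (α × α)} {u : α} (h : 0 < outDeg S u) : ∃ w, (u, w) ∈ S := by
  obtain ⟨⟨x, y⟩, ha⟩ := Finset.card_pos.1 h
  simp only [Finset.mem_filter] at ha
  obtain ⟨h1, h2⟩ := ha; subst h2; exact ⟨y, h1⟩

lemma exists_in_of_pos {S : Finset (α × α)} {u : α} (h : 0 < inDeg S u) : ∃ t, (t, u) ∈ S := by
  obtain ⟨⟨x, y⟩, ha⟩ := Finset.card_pos.1 h
  simp only [Finset.mem_filter] at ha
  obtain ⟨h1, h2⟩ := ha; subst h2; exact ⟨x, h1⟩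

lemma exists_in_of_out {S : Finset (α × α)} (hE : IsEulerian S) {u w : α} (h : (u, w) ∈ S) :
    ∃ t, (t, u) ∈ S :=
  exists_in_of_pos (hE u ▸ outDeg_pos_of_mem h)

lemma exists_out_of_in {S : Finset (α × α)} (hE : IsEulerian S) {t u : α} (h : (t, u) ∈ S) :
    ∃ w, (u, w) ∈ S :=
  exists_out_of_pos ((hE u).symm ▸ inDeg_pos_of_mem h)

lemma deg3 {p q r : α × α} (hpq : p ≠ q) (hpr : p ≠ r) (hqr : q ≠ r)
    (f : α × α → Prop) [DecidablePred f] :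
    (Finset.filter f {p, q, r}).card =
      ((if f p then 1 else 0) + ((if f q then 1 else 0) + (if f r then 1 else 0))) := by
  rw [Finset.card_filter,
    show ({p, q, r} : Finset (α × α)) = insert p (insert q {r}) from rfl,
    Finset.sum_insert (by simp [hpq, hpr]), Finset.sum_insert (by simp [hqr]),
    Finset.sum_singleton]

lemma deg4 {p q r s : α × α} (hpq : p ≠ q) (hpr : p ≠ r) (hps : p ≠ s) (hqr : q ≠ r)
    (hqs : q ≠ s) (hrs : r ≠ s) (f : α × α → Prop) [DecidablePred f] :
    (Finset.filter f {p, q, r, s}).card =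
      ((if f p then 1 else 0) + ((if f q then 1 else 0) +
        ((if f r then 1 else 0) + (if f s then 1 else 0)))) := by
  rw [Finset.card_filter,
    show ({p, q, r, s} : Finset (α × α)) = insert p (insert q (insert r {s})) from rfl,
    Finset.sum_insert (by simp [hpq, hpr, hps]), Finset.sum_insert (by simp [hqr, hqs]),
    Finset.sum_insert (by simp [hrs]), Finset.sum_singleton]

end

section
variable {V : Type*} [Fintype V] [DecidableEq V] {A : Finset (V × V)}

lemma self_not_mem_nbr (hs : ∀ v : V, (v, v) ∉ A) (v : V) : v ∉ nbr A v := by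
  simp [nbr, hs v]

lemma fst_mem_nbr_snd {e : V × V} (he : e ∈ A) : e.1 ∈ nbr A e.2 := by
  rw [mem_nbr]; right; exact he

lemma fst_not_mem_gammaEnds {e : V × V} (he : e ∈ A) : e.1 ∉ gammaEnds A e := by
  simp only [gammaEnds, Finset.mem_sdiff, Finset.mem_inter, not_and, not_not]
  intro h hc
  exact hc (Finset.mem_insert_self _ _) (fst_mem_nbr_snd he)

lemma ne_fst_of_gammaEnds {e : V × V} {x : V} (he : e ∈ A) (hx : x ∈ gammaEnds A e) :
    x ≠ e.1 := by
  rintro rfl; exact fst_not_mem_gammaEnds he hx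

lemma gammaEnds_cases (hs : ∀ v : V, (v, v) ∉ A) {e : V × V} {x : V} (he : e ∈ A)
    (hx : x ∈ gammaEnds A e) :
    x ∈ nbr A e.1 \ nbr A e.2 ∨ x ∈ nbr A e.2 \ nbrC A e.1 := by
  have hne := ne_fst_of_gammaEnds he hx
  simp only [gammaEnds, Finset.mem_sdiff, Finset.mem_union, Finset.mem_inter, not_and,
    nbrC, Finset.mem_insert] at hx
  obtain ⟨h1, h2⟩ := hx
  by_cases hw : x ∈ nbr A e.2
  · right
    rw [Finset.mem_sdiff]
    refine ⟨hw, ?_⟩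
    simp only [nbrC, Finset.mem_insert, not_or]
    exact ⟨hne, fun hv => (h2 (Or.inr hv)) hw⟩
  · left
    rw [Finset.mem_sdiff]
    rcases h1 with (h1 | h1)
    · rcases h1 with (rfl | h1)
      · exact absurd (fst_mem_nbr_snd he) hw
      · exact ⟨h1, hw⟩
    · exact absurd h1 hw

lemma mem_gammaEnds_of_near {e : V × V} {x : V} (hx : x ∈ nbr A e.1 \ nbr A e.2) :
    x ∈ gammaEnds A e := by
  rw [Finset.mem_sdiff] at hx
  simp only [gammaEnds, Finset.mem_sdiff, Finset.mem_union, Finset.mem_inter, not_and, nbrC,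
    Finset.mem_insert]
  exact ⟨Or.inl (Or.inr hx.1), fun _ => hx.2⟩

lemma mem_gammaEnds_of_mid {e : V × V} {x : V} (hx : x ∈ nbr A e.2 \ nbrC A e.1) :
    x ∈ gammaEnds A e := by
  rw [Finset.mem_sdiff] at hx
  simp only [gammaEnds, Finset.mem_sdiff, Finset.mem_union, Finset.mem_inter, not_and]
  refine ⟨Or.inr hx.1, fun h hw => ?_⟩
  exact absurd h hx.2

end
section
variable {V : Type*} [Fintype V] [DecidableEq V] {A : Finset (V × V)}

@[simp] lemma vstar_inj {x y : V} : (vstar x : WV V) = vstar y ↔ x = y := by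
  simp [vstar]

@[simp] lemma vsec_inj {e f : V × V} {x y : V} :
    (vsec e x : WV V) = vsec f y ↔ e = f ∧ x = y := by simp [vsec]

@[simp] lemma vmid_inj {e f : V × V} {x y : V} :
    (vmid e x : WV V) = vmid f y ↔ e = f ∧ x = y := by simp [vmid]

@[simp] lemma vstar_ne_vsec {x : V} {e : V × V} {y : V} : (vstar x : WV V) ≠ vsec e y := by
  simp [vstar, vsec]

@[simp] lemma vsec_ne_vstar {x : V} {e : V × V} {y : V} : (vsec e y : WV V) ≠ vstar x := by
  simp [vstar, vsec]

@[simp] lemma vstar_ne_vmid {x : V} {e : V × V} {y : V} : (vstar x : WV V) ≠ vmid e y := by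
  simp [vstar, vmid]

@[simp] lemma vmid_ne_vstar {x : V} {e : V × V} {y : V} : (vmid e y : WV V) ≠ vstar x := by
  simp [vstar, vmid]

@[simp] lemma vsec_ne_vmid {e f : V × V} {x y : V} : (vsec e x : WV V) ≠ vmid f y := by
  simp [vsec, vmid]

@[simp] lemma vmid_ne_vsec {e f : V × V} {x y : V} : (vmid f y : WV V) ≠ vsec e x := by
  simp [vsec, vmid]

/-- unique in-neighbor of the sector source. -/
lemma in_src (hs : ∀ v : V, (v, v) ∉ A) {t : WV V} {e : V × V} (h : (t, vsec e e.1) ∈ WArcSet A) : t = vstar e.1 := by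
  rw [mem_W_iff] at h
  rcases h with ⟨f, hf, h⟩ | ⟨f, hf, x, hx, h⟩ | ⟨f, hf, x, hx, h⟩ | ⟨f, hf, x, hx, h⟩ |
    ⟨f, hf, x, hx, h⟩
  · rw [Prod.mk.injEq, vsec_inj] at h
    obtain ⟨rfl, rfl, -⟩ := h
    rfl
  · rw [Prod.mk.injEq, vsec_inj] at h
    obtain ⟨-, rfl, h2⟩ := h
    rw [← h2] at hx
    exact absurd (Finset.mem_sdiff.1 hx).1 (self_not_mem_nbr hs e.1)
  · rw [Prod.mk.injEq] at h
    exact absurd h.2 (vsec_ne_vmid)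
  · rw [Prod.mk.injEq, vsec_inj] at h
    obtain ⟨-, rfl, h2⟩ := h
    rw [← h2] at hx
    exact absurd (Finset.mem_insert_self e.1 (nbr A e.1)) (Finset.mem_sdiff.1 hx).2
  · rw [Prod.mk.injEq] at h
    exact absurd h.2 (vsec_ne_vstar)

/-- unique in-neighbor of a sector vertex of "mid type". -/
lemma in_sec_mid (hs : ∀ v : V, (v, v) ∉ A) {t : WV V} {e : V × V} {x : V} (hx : x ∈ nbr A e.2 \ nbrC A e.1)
    (h : (t, vsec e x) ∈ WArcSet A) : t = vmid e x := by
  have hx1 : x ∈ nbr A e.2 := (Finset.mem_sdiff.1 hx).1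
  have hx2 : x ∉ nbrC A e.1 := (Finset.mem_sdiff.1 hx).2
  have hxe : x ≠ e.1 := by
    rintro rfl; exact hx2 (Finset.mem_insert_self _ _)
  have hxn : x ∉ nbr A e.1 := fun hc => hx2 (Finset.mem_insert_of_mem hc)
  rw [mem_W_iff] at h
  rcases h with ⟨f, hf, h⟩ | ⟨f, hf, y, hy, h⟩ | ⟨f, hf, y, hy, h⟩ | ⟨f, hf, y, hy, h⟩ |
    ⟨f, hf, y, hy, h⟩
  · rw [Prod.mk.injEq, vsec_inj] at h
    obtain ⟨-, rfl, h2⟩ := h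
    exact absurd h2 hxe
  · rw [Prod.mk.injEq, vsec_inj] at h
    obtain ⟨-, rfl, rfl⟩ := h
    exact absurd (Finset.mem_sdiff.1 hy).1 hxn
  · rw [Prod.mk.injEq] at h
    exact absurd h.2 (vsec_ne_vmid)
  · rw [Prod.mk.injEq, vsec_inj] at h
    obtain ⟨h1, rfl, rfl⟩ := h
    exact h1
  · rw [Prod.mk.injEq] at h
    exact absurd h.2 (vsec_ne_vstar)

/-- unique in-neighbor of a sector vertex of "near type". -/
lemma in_sec_near (hs : ∀ v : V, (v, v) ∉ A) {t : WV V} {e : V × V} {x : V} (hx : x ∈ nbr A e.1 \ nbr A e.2)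
    (h : (t, vsec e x) ∈ WArcSet A) : t = vsec e e.1 := by
  have hx1 : x ∈ nbr A e.1 := (Finset.mem_sdiff.1 hx).1
  have hx2 : x ∉ nbr A e.2 := (Finset.mem_sdiff.1 hx).2
  have hxe : x ≠ e.1 := by
    rintro rfl; exact self_not_mem_nbr hs e.1 hx1
  rw [mem_W_iff] at h
  rcases h with ⟨f, hf, h⟩ | ⟨f, hf, y, hy, h⟩ | ⟨f, hf, y, hy, h⟩ | ⟨f, hf, y, hy, h⟩ |
    ⟨f, hf, y, hy, h⟩
  · rw [Prod.mk.injEq, vsec_inj] at h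
    obtain ⟨-, rfl, h2⟩ := h
    exact absurd h2 hxe
  · rw [Prod.mk.injEq, vsec_inj] at h
    obtain ⟨h1, rfl, rfl⟩ := h
    exact h1
  · rw [Prod.mk.injEq] at h
    exact absurd h.2 (vsec_ne_vmid)
  · rw [Prod.mk.injEq, vsec_inj] at h
    obtain ⟨-, rfl, rfl⟩ := h
    exact absurd (Finset.mem_sdiff.1 hy).1 hx2
  · rw [Prod.mk.injEq] at h
    exact absurd h.2 (vsec_ne_vstar)

/-- unique in-neighbor of a middle vertex. -/
lemma in_mid {t : WV V} {e : V × V} {x : V} (h : (t, vmid e x) ∈ WArcSet A) :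
    t = vsec e e.1 := by
  rw [mem_W_iff] at h
  rcases h with ⟨f, hf, h⟩ | ⟨f, hf, y, hy, h⟩ | ⟨f, hf, y, hy, h⟩ | ⟨f, hf, y, hy, h⟩ |
    ⟨f, hf, y, hy, h⟩ <;> rw [Prod.mk.injEq] at h
  · exact absurd h.2.symm (vsec_ne_vmid)
  · exact absurd h.2.symm (vsec_ne_vmid)
  · rw [vmid_inj] at h
    obtain ⟨h1, rfl, -⟩ := h
    exact h1
  · exact absurd h.2.symm (vsec_ne_vmid)
  · exact absurd h.2.symm (vmid_ne_vstar).symm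

/-- unique out-neighbor of a middle vertex. -/
lemma out_mid {u : WV V} {e : V × V} {x : V} (h : (vmid e x, u) ∈ WArcSet A) :
    u = vsec e x := by
  rw [mem_W_iff] at h
  rcases h with ⟨f, hf, h⟩ | ⟨f, hf, y, hy, h⟩ | ⟨f, hf, y, hy, h⟩ | ⟨f, hf, y, hy, h⟩ |
    ⟨f, hf, y, hy, h⟩ <;> rw [Prod.mk.injEq] at h
  · exact absurd h.1 vmid_ne_vstar
  · exact absurd h.1 vmid_ne_vsec
  · exact absurd h.1 vmid_ne_vsec
  · rw [vmid_inj] at h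
    obtain ⟨⟨rfl, rfl⟩, h2⟩ := h
    exact h2
  · exact absurd h.1 vmid_ne_vsec

/-- unique out-neighbor of a non-source sector vertex. -/
lemma out_sec_ne {u : WV V} {e : V × V} {x : V} (hxe : x ≠ e.1)
    (h : (vsec e x, u) ∈ WArcSet A) : u = vstar x := by
  rw [mem_W_iff] at h
  rcases h with ⟨f, hf, h⟩ | ⟨f, hf, y, hy, h⟩ | ⟨f, hf, y, hy, h⟩ | ⟨f, hf, y, hy, h⟩ |
    ⟨f, hf, y, hy, h⟩ <;> rw [Prod.mk.injEq] at h
  · exact absurd h.1 vsec_ne_vstar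
  · rw [vsec_inj] at h
    obtain ⟨⟨rfl, h1⟩, -⟩ := h
    exact absurd h1 hxe
  · rw [vsec_inj] at h
    obtain ⟨⟨rfl, h1⟩, -⟩ := h
    exact absurd h1 hxe
  · exact absurd h.1 vsec_ne_vmid
  · rw [vsec_inj] at h
    obtain ⟨⟨rfl, rfl⟩, h2⟩ := h
    exact h2

/-- out-neighbors of the sector source. -/
lemma out_src {u : WV V} {e : V × V} (he : e ∈ A) (h : (vsec e e.1, u) ∈ WArcSet A) :
    (∃ x ∈ nbr A e.1 \ nbr A e.2, u = vsec e x) ∨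
    (∃ x ∈ nbr A e.2 \ nbrC A e.1, u = vmid e x) := by
  rw [mem_W_iff] at h
  rcases h with ⟨f, hf, h⟩ | ⟨f, hf, y, hy, h⟩ | ⟨f, hf, y, hy, h⟩ | ⟨f, hf, y, hy, h⟩ |
    ⟨f, hf, y, hy, h⟩ <;> rw [Prod.mk.injEq] at h
  · exact absurd h.1 vsec_ne_vstar
  · rw [vsec_inj] at h
    obtain ⟨⟨rfl, -⟩, h2⟩ := h
    exact Or.inl ⟨y, hy, h2⟩
  · rw [vsec_inj] at h
    obtain ⟨⟨rfl, -⟩, h2⟩ := h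
    exact Or.inr ⟨y, hy, h2⟩
  · exact absurd h.1 vsec_ne_vmid
  · rw [vsec_inj] at h
    obtain ⟨⟨rfl, h1⟩, -⟩ := h
    rw [← h1] at hy
    exact absurd hy (fst_not_mem_gammaEnds he)

end
section
variable {α : Type*} [DecidableEq α]

lemma outDeg3 {p q r : α × α} (hpq : p ≠ q) (hpr : p ≠ r) (hqr : q ≠ r) (u : α) :
    outDeg {p, q, r} u =
      (if p.1 = u then 1 else 0) + ((if q.1 = u then 1 else 0) + (if r.1 = u then 1 else 0)) :=
  deg3 hpq hpr hqr _

lemma inDeg3 {p q r : α × α} (hpq : p ≠ q) (hpr : p ≠ r) (hqr : q ≠ r) (u : α) :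
    inDeg {p, q, r} u =
      (if p.2 = u then 1 else 0) + ((if q.2 = u then 1 else 0) + (if r.2 = u then 1 else 0)) :=
  deg3 hpq hpr hqr _

lemma outDeg4 {p q r s : α × α} (hpq : p ≠ q) (hpr : p ≠ r) (hps : p ≠ s) (hqr : q ≠ r)
    (hqs : q ≠ s) (hrs : r ≠ s) (u : α) :
    outDeg {p, q, r, s} u =
      (if p.1 = u then 1 else 0) + ((if q.1 = u then 1 else 0) +
        ((if r.1 = u then 1 else 0) + (if s.1 = u then 1 else 0))) :=
  deg4 hpq hpr hps hqr hqs hrs _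

lemma inDeg4 {p q r s : α × α} (hpq : p ≠ q) (hpr : p ≠ r) (hps : p ≠ s) (hqr : q ≠ r)
    (hqs : q ≠ s) (hrs : r ≠ s) (u : α) :
    inDeg {p, q, r, s} u =
      (if p.2 = u then 1 else 0) + ((if q.2 = u then 1 else 0) +
        ((if r.2 = u then 1 else 0) + (if s.2 = u then 1 else 0))) :=
  deg4 hpq hpr hps hqr hqs hrs _

end

section
variable {V : Type*} [Fintype V] [DecidableEq V] {A : Finset (V × V)}

lemma ne_of_near {e : V × V} {x : V} (hs : ∀ v : V, (v, v) ∉ A)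
    (hx : x ∈ nbr A e.1 \ nbr A e.2) : x ≠ e.1 := by
  rintro rfl
  exact self_not_mem_nbr hs e.1 (Finset.mem_sdiff.1 hx).1

lemma ne_of_mid {e : V × V} {x : V} (hx : x ∈ nbr A e.2 \ nbrC A e.1) : x ≠ e.1 := by
  rintro rfl
  exact (Finset.mem_sdiff.1 hx).2 (Finset.mem_insert_self _ _)

lemma path_balanced (hs : ∀ v : V, (v, v) ∉ A) {e : V × V} {x : V} (he : e ∈ A)
    (hx : x ∈ gammaEnds A e) {u : WV V} (hu : ∀ y : V, u ≠ vstar y) :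
    outDeg (gammaPath A e x) u = inDeg (gammaPath A e x) u := by
  have hxe : x ≠ e.1 := ne_fst_of_gammaEnds he hx
  unfold gammaPath
  split_ifs with h
  · rw [outDeg4 (by simp) (by simp) (by simp) (by simp) (by simp) (by simp),
      inDeg4 (by simp) (by simp) (by simp) (by simp) (by simp) (by simp)]
    rw [if_neg (Ne.symm (hu e.1)), if_neg (Ne.symm (hu x))]
    ring
  · rw [outDeg3 (by simp) (by simp) (by simp [hxe]),
      inDeg3 (by simp) (by simp) (by simp [hxe])]
    rw [if_neg (Ne.symm (hu e.1)), if_neg (Ne.symm (hu x))]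
    ring

def secOf {V : Type*} : WV V × WV V → Option (V × V)
  | (_, Sum.inr (Sum.inl (e, _))) => some e
  | (_, Sum.inr (Sum.inr (e, _))) => some e
  | (Sum.inr (Sum.inl (e, _)), _) => some e
  | _ => none

lemma secOf_gammaPath {e : V × V} {x : V} {a : WV V × WV V} (ha : a ∈ gammaPath A e x) :
    secOf a = some e := by
  unfold gammaPath at ha
  split_ifs at ha <;>
    simp only [Finset.mem_insert, Finset.mem_singleton] at ha
  · rcases ha with rfl | rfl | rfl | rfl <;> rfl
  · rcases ha with rfl | rfl | rfl <;> rfl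

lemma mem_path_start {e : V × V} {x : V} :
    (vstar e.1, vsec e e.1) ∈ gammaPath A e x := by
  unfold gammaPath; split_ifs <;> simp

lemma mem_path_end {e : V × V} {x : V} :
    (vsec e x, vstar x) ∈ gammaPath A e x := by
  unfold gammaPath; split_ifs <;> simp

lemma mem_path_near {e : V × V} {x : V} (h : x ∉ nbr A e.2 \ nbrC A e.1) :
    (vsec e e.1, vsec e x) ∈ gammaPath A e x := by
  unfold gammaPath; rw [if_neg h]; simp

lemma mem_path_mid1 {e : V × V} {x : V} (h : x ∈ nbr A e.2 \ nbrC A e.1) :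
    (vsec e e.1, vmid e x) ∈ gammaPath A e x := by
  unfold gammaPath; rw [if_pos h]; simp

lemma mem_path_mid2 {e : V × V} {x : V} (h : x ∈ nbr A e.2 \ nbrC A e.1) :
    (vmid e x, vsec e x) ∈ gammaPath A e x := by
  unfold gammaPath; rw [if_pos h]; simp

lemma mem_path_second {e : V × V} {x : V} :
    (vsec e e.1, if x ∈ nbr A e.2 \ nbrC A e.1 then vmid e x else vsec e x) ∈
      gammaPath A e x := by
  unfold gammaPath; split_ifs <;> simp

lemma end_char {e : V × V} {x : V} (h : (vsec e x, vstar x) ∈ WArcSet A) :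
    e ∈ A ∧ x ∈ gammaEnds A e := by
  rw [mem_W_iff] at h
  rcases h with ⟨f, hf, h⟩ | ⟨f, hf, y, hy, h⟩ | ⟨f, hf, y, hy, h⟩ | ⟨f, hf, y, hy, h⟩ |
    ⟨f, hf, y, hy, h⟩ <;> rw [Prod.mk.injEq] at h
  · exact absurd h.2 vstar_ne_vsec
  · exact absurd h.2 vstar_ne_vsec
  · exact absurd h.2 vstar_ne_vmid
  · exact absurd h.2 vstar_ne_vsec
  · rw [vsec_inj] at h
    obtain ⟨⟨rfl, rfl⟩, -⟩ := h
    exact ⟨hf, hy⟩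

variable {S : Finset (WV V × WV V)}

lemma step_end (hE : IsEulerian S) (hS : S ⊆ WArcSet A) {e : V × V} {x : V} (hxe : x ≠ e.1)
    {t : WV V} (h : (t, vsec e x) ∈ S) : (vsec e x, vstar x) ∈ S := by
  obtain ⟨u, hu⟩ := exists_out_of_in hE h
  rwa [out_sec_ne hxe (hS hu)] at hu

lemma step_mid (hE : IsEulerian S) (hS : S ⊆ WArcSet A) {e : V × V} {x : V}
    {t : WV V} (h : (t, vmid e x) ∈ S) : (vmid e x, vsec e x) ∈ S := by
  obtain ⟨u, hu⟩ := exists_out_of_in hE h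
  rwa [out_mid (hS hu)] at hu

lemma back_src (hs : ∀ v : V, (v, v) ∉ A) (hE : IsEulerian S) (hS : S ⊆ WArcSet A)
    {e : V × V} {u : WV V} (h : (vsec e e.1, u) ∈ S) : (vstar e.1, vsec e e.1) ∈ S := by
  obtain ⟨t, ht⟩ := exists_in_of_out hE h
  rwa [in_src hs (hS ht)] at ht

lemma back_sec_mid (hs : ∀ v : V, (v, v) ∉ A) (hE : IsEulerian S) (hS : S ⊆ WArcSet A)
    {e : V × V} {x : V} (hx : x ∈ nbr A e.2 \ nbrC A e.1) {u : WV V}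
    (h : (vsec e x, u) ∈ S) : (vmid e x, vsec e x) ∈ S := by
  obtain ⟨t, ht⟩ := exists_in_of_out hE h
  rwa [in_sec_mid hs hx (hS ht)] at ht

lemma back_sec_near (hs : ∀ v : V, (v, v) ∉ A) (hE : IsEulerian S) (hS : S ⊆ WArcSet A)
    {e : V × V} {x : V} (hx : x ∈ nbr A e.1 \ nbr A e.2) {u : WV V}
    (h : (vsec e x, u) ∈ S) : (vsec e e.1, vsec e x) ∈ S := by
  obtain ⟨t, ht⟩ := exists_in_of_out hE h
  rwa [in_sec_near hs hx (hS ht)] at ht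

lemma back_mid (hE : IsEulerian S) (hS : S ⊆ WArcSet A) {e : V × V} {x : V} {u : WV V}
    (h : (vmid e x, u) ∈ S) : (vsec e e.1, vmid e x) ∈ S := by
  obtain ⟨t, ht⟩ := exists_in_of_out hE h
  rwa [in_mid (hS ht)] at ht

lemma path_subset (hs : ∀ v : V, (v, v) ∉ A) (hE : IsEulerian S) (hS : S ⊆ WArcSet A)
    {e : V × V} {x : V} (he : e ∈ A) (hx : x ∈ gammaEnds A e)
    (hend : (vsec e x, vstar x) ∈ S) : gammaPath A e x ⊆ S := by
  rcases gammaEnds_cases hs he hx with hnear | hmid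
  · have hcond : x ∉ nbr A e.2 \ nbrC A e.1 := fun hc =>
      (Finset.mem_sdiff.1 hnear).2 (Finset.mem_sdiff.1 hc).1
    have h2 : (vsec e e.1, vsec e x) ∈ S := back_sec_near hs hE hS hnear hend
    have h1 : (vstar e.1, vsec e e.1) ∈ S := back_src hs hE hS h2
    unfold gammaPath
    rw [if_neg hcond]
    simp only [Finset.insert_subset_iff, Finset.singleton_subset_iff]
    exact ⟨h1, h2, hend⟩
  · have h3 : (vmid e x, vsec e x) ∈ S := back_sec_mid hs hE hS hmid hend
    have h2 : (vsec e e.1, vmid e x) ∈ S := back_mid hE hS h3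
    have h1 : (vstar e.1, vsec e e.1) ∈ S := back_src hs hE hS h2
    unfold gammaPath
    rw [if_pos hmid]
    simp only [Finset.insert_subset_iff, Finset.singleton_subset_iff]
    exact ⟨h1, h2, h3, hend⟩

end
section
variable {α : Type*} [DecidableEq α]

lemma outDeg_biUnion {β : Type*} [DecidableEq β] (P : Finset β) (f : β → Finset (α × α))
    (hdisj : ∀ p ∈ P, ∀ q ∈ P, p ≠ q → Disjoint (f p) (f q)) (u : α) :
    outDeg (P.biUnion f) u = ∑ p ∈ P, outDeg (f p) u := by
  unfold outDeg
  rw [Finset.filter_biUnion, Finset.card_biUnion]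
  intro p hp q hq hne
  exact Finset.disjoint_filter_filter (hdisj p hp q hq hne)

lemma inDeg_biUnion {β : Type*} [DecidableEq β] (P : Finset β) (f : β → Finset (α × α))
    (hdisj : ∀ p ∈ P, ∀ q ∈ P, p ≠ q → Disjoint (f p) (f q)) (u : α) :
    inDeg (P.biUnion f) u = ∑ p ∈ P, inDeg (f p) u := by
  unfold inDeg
  rw [Finset.filter_biUnion, Finset.card_biUnion]
  intro p hp q hq hne
  exact Finset.disjoint_filter_filter (hdisj p hp q hq hne)

end
/-- A spanning subdigraph `S` of `W(D)` is Eulerian iff its edge set is a union of pairwise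
edge-disjoint γ-paths and each starred vertex `v*` has equal in- and out-degree in `S`. -/
theorem eulerian_iff_gammaPath_decomposition {V : Type*} [Fintype V] [DecidableEq V]
    (A : Finset (V × V)) (hsimple : ∀ v, (v, v) ∉ A)
    (S : Finset (WV V × WV V)) (hS : S ⊆ WArcSet A) :
    IsEulerian S ↔
      ((∃ P : Finset ((V × V) × V),
          (∀ p ∈ P, p.1 ∈ A ∧ p.2 ∈ gammaEnds A p.1) ∧
          ((P : Set ((V × V) × V)).Pairwise fun p q =>
            Disjoint (gammaPath A p.1 p.2) (gammaPath A q.1 q.2)) ∧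
          S = P.biUnion fun p => gammaPath A p.1 p.2) ∧
        ∀ v : V, outDeg S (vstar v) = inDeg S (vstar v)) := by
  constructor
  · intro hE
    have memP : ∀ p : (V × V) × V,
        p ∈ (A ×ˢ Finset.univ).filter (fun p => (vsec p.1 p.2, vstar p.2) ∈ S) ↔
          p.1 ∈ A ∧ (vsec p.1 p.2, vstar p.2) ∈ S := by
      intro p
      simp [Finset.mem_filter, Finset.mem_product]
    refine ⟨⟨(A ×ˢ Finset.univ).filter (fun p => (vsec p.1 p.2, vstar p.2) ∈ S),
      ?_, ?_, ?_⟩, fun v => hE (vstar v)⟩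
    · intro p hp
      rw [memP] at hp
      exact ⟨hp.1, (end_char (hS hp.2)).2⟩
    · intro p hp q hq hne
      rw [Finset.mem_coe, memP] at hp hq
      by_cases hfst : p.1 = q.1
      · exfalso
        have hne2 : p.2 ≠ q.2 := fun h => hne (Prod.ext hfst h)
        have hpx : p.2 ∈ gammaEnds A p.1 := (end_char (hS hp.2)).2
        have hqx : q.2 ∈ gammaEnds A q.1 := (end_char (hS hq.2)).2
        have harcp : (vsec p.1 p.1.1,
            if p.2 ∈ nbr A p.1.2 \ nbrC A p.1.1 then vmid p.1 p.2 else vsec p.1 p.2) ∈ S :=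
          path_subset hsimple hE hS hp.1 hpx hp.2 mem_path_second
        have harcq : (vsec q.1 q.1.1,
            if q.2 ∈ nbr A q.1.2 \ nbrC A q.1.1 then vmid q.1 q.2 else vsec q.1 q.2) ∈ S :=
          path_subset hsimple hE hS hq.1 hqx hq.2 mem_path_second
        rw [← hfst] at harcq
        have hcne : (if p.2 ∈ nbr A p.1.2 \ nbrC A p.1.1 then vmid p.1 p.2 else vsec p.1 p.2) ≠
            (if q.2 ∈ nbr A p.1.2 \ nbrC A p.1.1 then vmid p.1 q.2 else vsec p.1 q.2) := by
          split_ifs <;> simp [hne2]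
        have h2le : 2 ≤ outDeg S (vsec p.1 p.1.1) := by
          rw [show (2 : ℕ) = 1 + 1 from rfl]
          apply Finset.one_lt_card.2
          refine ⟨_, Finset.mem_filter.2 ⟨harcp, rfl⟩, _, Finset.mem_filter.2 ⟨harcq, rfl⟩, ?_⟩
          simp only [ne_eq, Prod.mk.injEq, true_and]
          exact hcne
        have hle1 : inDeg S (vsec p.1 p.1.1) ≤ 1 := by
          apply Finset.card_le_one.2
          rintro ⟨a1, a2⟩ ha ⟨b1, b2⟩ hb
          simp only [Finset.mem_filter] at ha hb
          obtain ⟨ha1, ha2⟩ := ha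
          obtain ⟨hb1, hb2⟩ := hb
          subst ha2; subst hb2
          rw [in_src hsimple (hS ha1), in_src hsimple (hS hb1)]
        rw [hE] at h2le
        omega
      · exact Finset.disjoint_left.2 fun a h1 h2 =>
          hfst (Option.some.inj ((secOf_gammaPath h1).symm.trans (secOf_gammaPath h2)))
    · ext a
      simp only [Finset.mem_biUnion]
      constructor
      · intro haS
        have haW := hS haS
        rw [mem_W_iff] at haW
        rcases haW with ⟨e, he, rfl⟩ | ⟨e, he, x, hx, rfl⟩ | ⟨e, he, x, hx, rfl⟩ |
          ⟨e, he, x, hx, rfl⟩ | ⟨e, he, x, hx, rfl⟩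
        · obtain ⟨u, hu⟩ := exists_out_of_in hE haS
          rcases out_src he (hS hu) with ⟨x, hx, rfl⟩ | ⟨x, hx, rfl⟩
          · have hend := step_end hE hS (ne_of_near hsimple hx) hu
            exact ⟨(e, x), (memP _).2 ⟨he, hend⟩, mem_path_start⟩
          · have h3 := step_mid hE hS hu
            have hend := step_end hE hS (ne_of_mid hx) h3
            exact ⟨(e, x), (memP _).2 ⟨he, hend⟩, mem_path_start⟩
        · have hend := step_end hE hS (ne_of_near hsimple hx) haS
          have hcond : x ∉ nbr A e.2 \ nbrC A e.1 := fun hc =>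
            (Finset.mem_sdiff.1 hx).2 (Finset.mem_sdiff.1 hc).1
          exact ⟨(e, x), (memP _).2 ⟨he, hend⟩, mem_path_near hcond⟩
        · have h3 := step_mid hE hS haS
          have hend := step_end hE hS (ne_of_mid hx) h3
          exact ⟨(e, x), (memP _).2 ⟨he, hend⟩, mem_path_mid1 hx⟩
        · have hend := step_end hE hS (ne_of_mid hx) haS
          exact ⟨(e, x), (memP _).2 ⟨he, hend⟩, mem_path_mid2 hx⟩
        · exact ⟨(e, x), (memP _).2 ⟨he, haS⟩, mem_path_end⟩
      · rintro ⟨p, hp, hap⟩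
        rw [memP] at hp
        exact path_subset hsimple hE hS hp.1 (end_char (hS hp.2)).2 hp.2 hap
  · rintro ⟨⟨P, hP1, hP2, rfl⟩, hstar⟩
    intro u
    have hd : ∀ p ∈ P, ∀ q ∈ P, p ≠ q →
        Disjoint (gammaPath A p.1 p.2) (gammaPath A q.1 q.2) := fun p hp q hq hne =>
      hP2 (Finset.mem_coe.2 hp) (Finset.mem_coe.2 hq) hne
    rcases u with v | m
    · exact hstar v
    · have hu : ∀ y : V, (Sum.inr m : WV V) ≠ vstar y := by
        intro y h
        simp [vstar] at h
      rw [outDeg_biUnion _ _ hd, inDeg_biUnion _ _ hd]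
      exact Finset.sum_congr rfl fun p hp =>
        path_balanced hsimple (hP1 p hp).1 (hP1 p hp).2 hu
end

section
/- Let D be an orientation of a graph G. If for every odd cycle C of G there exists a vertex u ∈ V(C) such that u is simplicial in G (its neighborhood is a clique) and d⁺_D(u) = 0, then every odd directed cycle is absent from W(D); consequently EO(W(D)) = 0 and EE(W(D)) ≥ 1. -/
open Finset MvPolynomial

section GraphAux
variable {V : Type*} [DecidableEq V] {H : SimpleGraph V}

/-- In a path `r : v → u`, if the edge `s(u,v)` occurs, the path has length 1. -/
lemma aux_path_edge_end : ∀ {v u : V} (r : H.Walk v u), r.IsPath → s(u, v) ∈ r.edges →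
    r.length = 1 := by
  intro v u r hr he
  cases r with
  | nil => simp at he
  | @cons _ x _ h' r' =>
    rw [SimpleGraph.Walk.edges_cons, List.mem_cons] at he
    rcases he with hs | hs
    · rw [Sym2.eq_iff] at hs
      rcases hs with ⟨h1, h2⟩ | ⟨h1, h2⟩
      · exact absurd (h2 ▸ h') (by subst h2; simp)
      · subst h1
        have : r'.IsPath := hr.of_cons
        rw [SimpleGraph.Walk.isPath_iff_eq_nil] at this
        simp [this]
    · have hv : v ∈ r'.support := SimpleGraph.Walk.snd_mem_support_of_mem_edges r' hs
      have := (SimpleGraph.Walk.cons_isPath_iff h' r').mp hr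
      exact absurd hv this.2
end GraphAux

section GraphAux2
variable {V : Type*} [DecidableEq V] {H : SimpleGraph V}

lemma aux_odd_closed_walk (n : ℕ) : ∀ {u : V} (p : H.Walk u u), p.length ≤ n →
    Odd p.length → ∃ (w : V) (C : H.Walk w w), C.IsCycle ∧ Odd C.length := by
  induction n with
  | zero =>
    intro u p hl ho
    rw [Nat.le_zero] at hl
    rw [hl] at ho
    exact absurd ho (by decide)
  | succ n ih =>
    intro u p hl ho
    by_cases hnod : p.support.tail.Nodup
    · cases p with
      | nil => simp [Nat.odd_iff] at ho
      | @cons _ x _ h r =>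
        have hrp : r.IsPath := by
          rw [SimpleGraph.Walk.isPath_def]
          simpa using hnod
        by_cases he : s(u, x) ∈ r.edges
        · have := aux_path_edge_end r hrp he
          rw [SimpleGraph.Walk.length_cons, this] at ho
          norm_num [Nat.odd_iff] at ho
        · exact ⟨u, SimpleGraph.Walk.cons h r,
            (SimpleGraph.Walk.cons_isCycle_iff r h).mpr ⟨hrp, he⟩, ho⟩
    · obtain ⟨w, hw2⟩ : ∃ w, 2 ≤ p.support.tail.count w := by
        by_contra hcon
        push_neg at hcon
        exact hnod (List.nodup_iff_count_le_one.mpr fun a => by have := hcon a; omega)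
      have hw : w ∈ p.support :=
        List.mem_of_mem_tail (List.count_pos_iff.mp (by omega))
      have hq2 : 2 ≤ (p.rotate w hw).support.tail.count w := by
        rwa [((SimpleGraph.Walk.support_rotate p w hw).perm).count_eq]
      have hlen : (p.rotate w hw).length = p.length := by
        have h1 := congrArg SimpleGraph.Walk.length (p.take_spec hw)
        rw [SimpleGraph.Walk.length_append] at h1
        rw [SimpleGraph.Walk.rotate, SimpleGraph.Walk.length_append]
        omega
      generalize hq : p.rotate w hw = q at hq2 hlen
      cases q with
      | nil => simp at hq2
      | @cons _ x _ h' r' =>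
        have hm : w ∈ r'.support := by
          refine List.count_pos_iff.mp ?_
          simpa using (by omega : 1 ≤ (SimpleGraph.Walk.cons h' r').support.tail.count w)
        have hspec := r'.take_spec hm
        have hlsum : (r'.takeUntil w hm).length + (r'.dropUntil w hm).length = r'.length := by
          conv_rhs => rw [← hspec]
          rw [SimpleGraph.Walk.length_append]
        have hdrop : 1 ≤ (r'.dropUntil w hm).length := by
          by_contra hd
          have hd0 : (r'.dropUntil w hm).length = 0 := by omega
          have hcount : r'.support.count w = 1 := by
            conv_lhs => rw [← hspec]
            rw [SimpleGraph.Walk.support_append, List.count_append]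
            have h1 := SimpleGraph.Walk.count_support_takeUntil_eq_one r' hm
            have htail : (r'.dropUntil w hm).support.tail = [] := by
              have h2 : (r'.dropUntil w hm).support.length = (r'.dropUntil w hm).length + 1 :=
                SimpleGraph.Walk.length_support _
              have h4 : (r'.dropUntil w hm).support.tail.length = 0 := by
                rw [List.length_tail, h2, hd0]
              exact List.length_eq_zero_iff.mp h4
            rw [htail]
            simpa using h1
          have : (SimpleGraph.Walk.cons h' r').support.tail.count w = r'.support.count w := by simp
          omega
        set c1 : H.Walk w w := SimpleGraph.Walk.cons h' (r'.takeUntil w hm) with hc1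
        set c2 : H.Walk w w := r'.dropUntil w hm with hc2
        have hsum : c1.length + c2.length = p.length := by
          rw [hc1, SimpleGraph.Walk.length_cons]
          rw [← hlen, SimpleGraph.Walk.length_cons]
          omega
        have hc1pos : 1 ≤ c1.length := by
          rw [hc1, SimpleGraph.Walk.length_cons]; omega
        have hor : Odd c1.length ∨ Odd c2.length := by
          rw [← hsum, Nat.odd_iff] at ho
          rw [Nat.odd_iff]
          rw [Nat.odd_iff]
          omega
        rcases hor with h1 | h2
        · exact ih c1 (by omega) h1
        · exact ih c2 (by omega) h2
end GraphAux2

section GraphAux3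
variable {V : Type*} {H : SimpleGraph V}

lemma aux_exists_coloring (hev : ∀ (u : V) (p : H.Walk u u), ¬ Odd p.length) :
    ∃ g : V → ZMod 2, ∀ a b, H.Adj a b → g a ≠ g b := by
  classical
  have hreach : ∀ v : V, H.Reachable (H.connectedComponentMk v).out v := by
    intro v
    rw [← SimpleGraph.ConnectedComponent.eq]
    exact Quot.out_eq _
  refine ⟨fun v => (((hreach v).some).length : ZMod 2), ?_⟩
  intro a b hab ha
  have hcc : H.connectedComponentMk a = H.connectedComponentMk b :=
    SimpleGraph.ConnectedComponent.sound hab.reachable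
  set pa := (hreach a).some with hpa
  have hb' : H.Reachable (H.connectedComponentMk a).out b := by rw [hcc]; exact hreach b
  have hsame : ∀ (q : H.Walk (H.connectedComponentMk a).out b),
      (pa.length : ZMod 2) ≠ (q.length : ZMod 2) := by
    intro q hq
    have hcl := hev _ (pa.append ((SimpleGraph.Walk.cons hab SimpleGraph.Walk.nil).append
      q.reverse))
    rw [Nat.not_odd_iff_even, SimpleGraph.Walk.length_append, SimpleGraph.Walk.length_append,
      SimpleGraph.Walk.length_cons, SimpleGraph.Walk.length_nil,
      SimpleGraph.Walk.length_reverse] at hcl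
    rw [ZMod.natCast_eq_natCast_iff] at hq
    rw [Nat.ModEq, Nat.even_iff] at *
    omega
  exact hsame ((hreach b).some.copy (by rw [hcc]) rfl) (by simpa using ha)
end GraphAux3

section GraphAux4
variable {V : Type*} {H : SimpleGraph V}

lemma aux_support_adj : ∀ {a b : V} (p : H.Walk a b) (u : V), u ∈ p.support →
    u = b ∨ ∃ y, H.Adj u y := by
  intro a b p
  induction p with
  | nil => intro u hu; left; simpa using hu
  | @cons a x b h q ih =>
    intro u hu
    rw [SimpleGraph.Walk.support_cons, List.mem_cons] at hu
    rcases hu with rfl | hu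
    · exact Or.inr ⟨x, h⟩
    · exact ih u hu

lemma aux_cycle_support_adj {w : V} (C : H.Walk w w) (hC : C.IsCycle) (u : V)
    (hu : u ∈ C.support) : ∃ y, H.Adj u y := by
  rcases aux_support_adj C u hu with rfl | h
  · cases C with
    | nil => exact absurd hC SimpleGraph.Walk.IsCycle.not_of_nil
    | cons h q => exact ⟨_, h⟩
  · exact h
end GraphAux4

section WAux
variable {V : Type*} [Fintype V] [DecidableEq V]

/-- The flip potential. -/
def myF (g : V → ZMod 2) : WV V → ZMod 2
  | Sum.inl x => g x
  | Sum.inr (Sum.inl (_, x)) => g x + 1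
  | Sum.inr (Sum.inr (e, _)) => g e.1

lemma mem_WArcSet_iff (A : Finset (V × V)) (a b : WV V) :
    (a, b) ∈ WArcSet A ↔
      (∃ e ∈ A, a = vstar e.1 ∧ b = vsec e e.1) ∨
      (∃ e ∈ A, ∃ x ∈ nbr A e.1 \ nbr A e.2, a = vsec e e.1 ∧ b = vsec e x) ∨
      (∃ e ∈ A, ∃ x ∈ nbr A e.2 \ nbrC A e.1, a = vsec e e.1 ∧ b = vmid e x) ∨
      (∃ e ∈ A, ∃ x ∈ nbr A e.2 \ nbrC A e.1, a = vmid e x ∧ b = vsec e x) ∨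
      (∃ e ∈ A, ∃ x ∈ gammaEnds A e, a = vsec e x ∧ b = vstar x) := by
  simp only [WArcSet, Finset.mem_union, Finset.mem_image, Finset.mem_biUnion, Prod.ext_iff]
  constructor
  · rintro ((((⟨e, he, h1, h2⟩ | ⟨e, he, x, hx, h1, h2⟩) | ⟨e, he, x, hx, h1, h2⟩) |
      ⟨e, he, x, hx, h1, h2⟩) | ⟨e, he, x, hx, h1, h2⟩)
    · exact Or.inl ⟨e, he, h1.symm, h2.symm⟩
    · exact Or.inr (Or.inl ⟨e, he, x, hx, h1.symm, h2.symm⟩)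
    · exact Or.inr (Or.inr (Or.inl ⟨e, he, x, hx, h1.symm, h2.symm⟩))
    · exact Or.inr (Or.inr (Or.inr (Or.inl ⟨e, he, x, hx, h1.symm, h2.symm⟩)))
    · exact Or.inr (Or.inr (Or.inr (Or.inr ⟨e, he, x, hx, h1.symm, h2.symm⟩)))
  · rintro (⟨e, he, h1, h2⟩ | ⟨e, he, x, hx, h1, h2⟩ | ⟨e, he, x, hx, h1, h2⟩ |
      ⟨e, he, x, hx, h1, h2⟩ | ⟨e, he, x, hx, h1, h2⟩)
    · exact Or.inl (Or.inl (Or.inl (Or.inl ⟨e, he, h1.symm, h2.symm⟩)))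
    · exact Or.inl (Or.inl (Or.inl (Or.inr ⟨e, he, x, hx, h1.symm, h2.symm⟩)))
    · exact Or.inl (Or.inl (Or.inr ⟨e, he, x, hx, h1.symm, h2.symm⟩))
    · exact Or.inl (Or.inr ⟨e, he, x, hx, h1.symm, h2.symm⟩)
    · exact Or.inr ⟨e, he, x, hx, h1.symm, h2.symm⟩

end WAux

section WAux2
variable {V : Type*} [Fintype V] [DecidableEq V]

lemma zmod2_ne {a b : ZMod 2} (h : a ≠ b) : b = a + 1 := by revert h; revert a b; decide

lemma zmod2_ne_ne {a b c : ZMod 2} (h1 : a ≠ c) (h2 : b ≠ c) : a = b := by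
  revert h1 h2; revert a b c; decide

lemma zmod2_add2 (a : ZMod 2) : a + 1 + 1 = a := by revert a; decide

lemma vsec_out {A : Finset (V × V)} {e : V × V} {x : V} {c : WV V}
    (h : (vsec e x, c) ∈ WArcSet A) (hx : x ≠ e.1) : c = vstar x := by
  rw [mem_WArcSet_iff] at h
  rcases h with ⟨e', _, h1, _⟩ | ⟨e', _, x', _, h1, _⟩ | ⟨e', _, x', _, h1, _⟩ |
    ⟨e', _, x', _, h1, _⟩ | ⟨e', _, x', _, h1, h2⟩
  · exact absurd h1 (by simp [vsec, vstar])
  · simp only [vsec, Sum.inr.injEq, Sum.inl.injEq, Prod.mk.injEq] at h1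
    exact absurd (by rw [h1.1]; exact h1.2) hx
  · simp only [vsec, Sum.inr.injEq, Sum.inl.injEq, Prod.mk.injEq] at h1
    exact absurd (by rw [h1.1]; exact h1.2) hx
  · exact absurd h1 (by simp [vsec, vmid])
  · simp only [vsec, Sum.inr.injEq, Sum.inl.injEq, Prod.mk.injEq] at h1
    rw [h2, h1.2]

lemma vstar_out {A : Finset (V × V)} {x : V} {d : WV V}
    (h : (vstar x, d) ∈ WArcSet A) : outDeg A x ≠ 0 := by
  rw [mem_WArcSet_iff] at h
  rcases h with ⟨e', he', h1, _⟩ | ⟨e', _, x', _, h1, _⟩ | ⟨e', _, x', _, h1, _⟩ |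
    ⟨e', _, x', _, h1, _⟩ | ⟨e', _, x', _, h1, _⟩
  · simp only [vstar, Sum.inl.injEq] at h1
    intro h0
    have : e' ∈ A.filter fun p => p.1 = x := Finset.mem_filter.mpr ⟨he', h1.symm⟩
    rw [outDeg, Finset.card_eq_zero] at h0
    simp [h0] at this
  all_goals exact absurd h1 (by simp [vstar, vsec, vmid])

variable (G : SimpleGraph V) [DecidableRel G.Adj]

lemma flip_lemma (A : Finset (V × V)) (hA : IsOrientation G A) (g : V → ZMod 2)
    (hg : ∀ a b, G.Adj a b → ¬ (G.IsClique (G.neighborSet a) ∧ outDeg A a = 0) →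
      ¬ (G.IsClique (G.neighborSet b) ∧ outDeg A b = 0) → g a ≠ g b)
    (S : Set (WV V × WV V)) (hS : ∀ p ∈ S, p ∈ WArcSet A)
    (hsucc : ∀ p ∈ S, ∃ c, (p.2, c) ∈ S) :
    ∀ p ∈ S, myF g p.2 = myF g p.1 + 1 := by
  have hmemnbr : ∀ v x : V, x ∈ nbr A v → G.Adj v x := by
    intro v x hx
    simp only [nbr, Finset.mem_filter, Finset.mem_univ, true_and] at hx
    exact (hA.1 v x).mpr hx
  have hnotT : ∀ e ∈ A, ¬ (G.IsClique (G.neighborSet e.1) ∧ outDeg A e.1 = 0) := by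
    rintro e he ⟨-, h0⟩
    have : e ∈ A.filter fun p => p.1 = e.1 := Finset.mem_filter.mpr ⟨he, rfl⟩
    rw [outDeg, Finset.card_eq_zero] at h0
    simp [h0] at this
  have hxT : ∀ (e : V × V) (x : V), x ≠ e.1 → (vsec e x, (vstar x : WV V)) ∈ S →
      ¬ (G.IsClique (G.neighborSet x) ∧ outDeg A x = 0) := by
    rintro e x hx hmem ⟨-, h0⟩
    obtain ⟨d, hd⟩ := hsucc _ hmem
    exact vstar_out (hS _ hd) h0
  rintro ⟨a, b⟩ hab
  have hW := hS _ hab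
  rw [mem_WArcSet_iff] at hW
  rcases hW with ⟨e, he, rfl, rfl⟩ | ⟨e, he, x, hx, rfl, rfl⟩ | ⟨e, he, x, hx, rfl, rfl⟩ |
    ⟨e, he, x, hx, rfl, rfl⟩ | ⟨e, he, x, hx, rfl, rfl⟩
  · simp [myF, vstar, vsec]
  · -- sector source to sector x, x ∈ N(v) \ N(w)
    rw [Finset.mem_sdiff] at hx
    have hadj : G.Adj e.1 x := hmemnbr _ _ hx.1
    have hxne : x ≠ e.1 := hadj.ne'
    have hbS : ((vsec e x : WV V), (vstar x : WV V)) ∈ S := by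
      obtain ⟨c, hc⟩ := hsucc _ hab
      rwa [vsec_out (hS _ hc) hxne] at hc
    have hgx := hg e.1 x hadj (hnotT e he) (hxT e x hxne hbS)
    simp only [myF, vsec]
    rw [zmod2_ne hgx]
  · simp [myF, vsec, vmid, zmod2_add2]
  · -- middle to sector x, x ∈ N(w) \ N[v]
    rw [Finset.mem_sdiff] at hx
    have hadjwx : G.Adj e.2 x := hmemnbr _ _ hx.1
    have hadjvw : G.Adj e.1 e.2 := (hA.1 e.1 e.2).mpr (Or.inl he)
    have hxnv : x ∉ nbrC A e.1 := hx.2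
    have hxne : x ≠ e.1 := fun h => hxnv (by simp [nbrC, h])
    have hnadj : ¬ G.Adj e.1 x := by
      intro hadj
      exact hxnv (by simp [nbrC, nbr, (hA.1 e.1 x).mp hadj])
    have hwnotT : ¬ (G.IsClique (G.neighborSet e.2) ∧ outDeg A e.2 = 0) := by
      rintro ⟨hcl, -⟩
      exact hnadj (hcl (by simpa using hadjvw.symm) (by simpa using hadjwx) hxne.symm)
    have hbS : ((vsec e x : WV V), (vstar x : WV V)) ∈ S := by
      obtain ⟨c, hc⟩ := hsucc _ hab
      rwa [vsec_out (hS _ hc) hxne] at hc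
    have h1 := hg e.1 e.2 hadjvw (hnotT e he) hwnotT
    have h2 := hg x e.2 hadjwx.symm (hxT e x hxne hbS) hwnotT
    simp only [myF, vsec, vmid]
    rw [zmod2_ne_ne h1 h2]
  · simp [myF, vsec, vstar, zmod2_add2]

end WAux2


section MainAux
variable {V : Type*} [Fintype V] [DecidableEq V]

/-- The graph `G` restricted to vertices that are not simplicial sinks. -/
def Gcon (G : SimpleGraph V) [DecidableRel G.Adj] (A : Finset (V × V)) : SimpleGraph V where
  Adj a b := G.Adj a b ∧ ¬(G.IsClique (G.neighborSet a) ∧ outDeg A a = 0) ∧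
    ¬(G.IsClique (G.neighborSet b) ∧ outDeg A b = 0)
  symm := by constructor; rintro a b ⟨h, ha, hb⟩; exact ⟨h.symm, hb, ha⟩
  loopless := by constructor; rintro a ⟨h, -⟩; exact G.loopless.irrefl a h

end MainAux

/-- If every odd cycle of `G` contains a simplicial vertex of out-degree 0 in `D`, then
`W(D)` has no odd directed cycle; consequently `EO(W(D)) = 0` and `EE(W(D)) ≥ 1`. -/
theorem no_odd_dicycle_of_simplicial_sinks {V : Type*} [Fintype V] [DecidableEq V]
    (G : SimpleGraph V) [DecidableRel G.Adj]
    (A : Finset (V × V)) (hA : IsOrientation G A)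
    (hodd : ∀ (v : V) (C : G.Walk v v), C.IsCycle → Odd C.length →
      ∃ u ∈ C.support, G.IsClique (G.neighborSet u) ∧ outDeg A u = 0) :
    (∀ n : ℕ, Odd n → ¬ HasDicycleLen (WArcSet A) n) ∧
      EO (WArcSet A) = 0 ∧ 1 ≤ EE (WArcSet A) := by
  classical
  -- no odd cycle in the restricted graph
  have hle : Gcon G A ≤ G := fun a b h => h.1
  have hnoc : ∀ (w : V) (C : (Gcon G A).Walk w w), C.IsCycle → ¬ Odd C.length := by
    intro w C hC hCodd
    obtain ⟨u, hu, hcl, hdeg⟩ := hodd w (C.mapLe hle) (hC.mapLe hle)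
      (by rwa [SimpleGraph.Walk.mapLe, SimpleGraph.Walk.length_map])
    have hu' : u ∈ C.support := by
      rw [SimpleGraph.Walk.mapLe, SimpleGraph.Walk.support_map] at hu
      simpa using hu
    obtain ⟨y, hy⟩ := aux_cycle_support_adj C hC u hu'
    exact hy.2.1 ⟨hcl, hdeg⟩
  have hev : ∀ (u : V) (p : (Gcon G A).Walk u u), ¬ Odd p.length := by
    intro u p hoddp
    obtain ⟨w, C, hC, hCo⟩ := aux_odd_closed_walk p.length p le_rfl hoddp
    exact hnoc w C hC hCo
  obtain ⟨g, hg⟩ := aux_exists_coloring hev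
  have hg' : ∀ a b, G.Adj a b → ¬(G.IsClique (G.neighborSet a) ∧ outDeg A a = 0) →
      ¬(G.IsClique (G.neighborSet b) ∧ outDeg A b = 0) → g a ≠ g b :=
    fun a b h ha hb => hg a b ⟨h, ha, hb⟩
  refine ⟨?_, ?_, ?_⟩
  · -- no odd dicycle
    rintro n hn ⟨hpos, c, hinj, hc⟩
    set S : Set (WV V × WV V) := {p | ∃ i, p = (c i, c (i + 1))} with hSdef
    have hSsub : ∀ p ∈ S, p ∈ WArcSet A := by rintro p ⟨i, rfl⟩; exact hc i
    have hsucc : ∀ p ∈ S, ∃ d, (p.2, d) ∈ S := by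
      rintro p ⟨i, rfl⟩; exact ⟨c (i + 1 + 1), ⟨i + 1, rfl⟩⟩
    have hflip := flip_lemma G A hA g hg' S hSsub hsucc
    have hstep : ∀ i : ZMod n, myF g (c (i + 1)) = myF g (c i) + 1 := fun i =>
      hflip (c i, c (i + 1)) ⟨i, rfl⟩
    have hiter : ∀ k : ℕ, myF g (c (k : ZMod n)) = myF g (c 0) + (k : ZMod 2) := by
      intro k
      induction k with
      | zero => simp
      | succ m ihm =>
        push_cast
        rw [hstep ((m : ZMod n)), ihm]
        ring
    have hn2 := hiter n
    rw [ZMod.natCast_self] at hn2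
    have : (n : ZMod 2) = 0 := by
      rwa [left_eq_add] at hn2
    rw [ZMod.natCast_eq_zero_iff] at this
    rw [Nat.odd_iff] at hn
    omega
  · -- EO = 0
    rw [EO, Finset.card_eq_zero, Finset.filter_eq_empty_iff]
    rintro S hSp ⟨hE, hOddc⟩
    rw [Finset.mem_powerset] at hSp
    have hSsub : ∀ p ∈ (↑S : Set (WV V × WV V)), p ∈ WArcSet A := fun p hp => hSp hp
    have hsucc : ∀ p ∈ (↑S : Set (WV V × WV V)), ∃ d, (p.2, d) ∈ (↑S : Set (WV V × WV V)) := by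
      intro p hp
      have hin : 0 < inDeg S p.2 := Finset.card_pos.mpr ⟨p, Finset.mem_filter.mpr ⟨hp, rfl⟩⟩
      have hout : 0 < outDeg S p.2 := by rw [hE p.2]; exact hin
      obtain ⟨q, hq⟩ := Finset.card_pos.mp hout
      rw [Finset.mem_filter] at hq
      exact ⟨q.2, by rw [show (p.2, q.2) = q from by rw [← hq.2]]; exact hq.1⟩
    have hflip := flip_lemma G A hA g hg' _ hSsub hsucc
    have h1 : ∑ p ∈ S, myF g p.2 = ∑ p ∈ S, myF g p.1 + (S.card : ZMod 2) := by
      rw [Finset.sum_congr rfl fun p hp => hflip p hp, Finset.sum_add_distrib,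
        Finset.sum_const, nsmul_eq_mul, mul_one]
    have h2 : ∑ p ∈ S, myF g p.2 = ∑ p ∈ S, myF g p.1 := by
      rw [← Finset.sum_fiberwise_of_maps_to (fun p (_ : p ∈ S) => Finset.mem_univ p.2)
        (fun p => myF g p.2),
        ← Finset.sum_fiberwise_of_maps_to (fun p (_ : p ∈ S) => Finset.mem_univ p.1)
        (fun p => myF g p.1)]
      refine Finset.sum_congr rfl fun v _ => ?_
      have e2 : ∑ p ∈ S.filter (fun p => p.2 = v), myF g p.2 = (inDeg S v) • myF g v := by
        rw [inDeg, ← Finset.sum_const]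
        exact Finset.sum_congr rfl fun p hp => by
          rw [(Finset.mem_filter.mp hp).2]
      have e1 : ∑ p ∈ S.filter (fun p => p.1 = v), myF g p.1 = (outDeg S v) • myF g v := by
        rw [outDeg, ← Finset.sum_const]
        exact Finset.sum_congr rfl fun p hp => by
          rw [(Finset.mem_filter.mp hp).2]
      rw [e1, e2, hE v]
    rw [h2, left_eq_add, ZMod.natCast_eq_zero_iff] at h1
    rw [Nat.odd_iff] at hOddc
    omega
  · -- EE ≥ 1
    rw [EE]
    refine Finset.card_pos.mpr ⟨∅, Finset.mem_filter.mpr ⟨Finset.mem_powerset.mpr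
      (Finset.empty_subset _), fun v => by simp [outDeg, inDeg], by simp⟩⟩
end
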